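/- arXiv:math/0005181 — 7 statements merged into one kernel-verified Lean document; each statement's English description precedes it below -/
import Mathlib

section
/- Let X, Y, S, T be geodesic metric spaces, f: X → Y a quasi-isometry, and σ: S → X, τ: T → Y uniformly proper maps such that the Hausdorff distance between f(σ(S)) and τ(T) is finite. Then any map g: S → T with d_Y(f(σ(x)), τ(g(x))) uniformly bounded is a quasi-isometry. -/
/-- A geodesic metric space: any two points are joined by an isometric path. -/
def IsGeodesicSpace (X : Type*) [MetricSpace X] : Prop :=
  ∀ x y : X, ∃ γ : ℝ → X, γ 0 = x ∧ γ (dist x y) = y ∧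
    ∀ s ∈ Set.Icc (0 : ℝ) (dist x y), ∀ t ∈ Set.Icc (0 : ℝ) (dist x y),
      dist (γ s) (γ t) = |s - t|

/-- `σ : S → X` is uniformly proper with uniformity data `ρ, K, C`. -/
def IsUniformlyProper {S X : Type*} [MetricSpace S] [MetricSpace X]
    (ρ : ℝ → ℝ) (K C : ℝ) (σ : S → X) : Prop :=
  Filter.Tendsto ρ Filter.atTop Filter.atTop ∧
  ∀ x y : S, ρ (dist x y) ≤ dist (σ x) (σ y) ∧ dist (σ x) (σ y) ≤ K * dist x y + C

private lemma chain_dist {S : Type*} [MetricSpace S] (u : ℕ → S) (c : ℝ) :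
    ∀ n : ℕ, (∀ i, i < n → dist (u i) (u (i+1)) ≤ c) → dist (u 0) (u n) ≤ n * c := by
  intro n
  induction n with
  | zero => intro _; simp
  | succ n ih =>
    intro h
    have h1 := ih (fun i hi => h i (Nat.lt_succ_of_lt hi))
    have h2 := h n (Nat.lt_succ_self n)
    calc dist (u 0) (u (n+1)) ≤ dist (u 0) (u n) + dist (u n) (u (n+1)) := dist_triangle _ _ _
      _ ≤ n * c + c := add_le_add h1 h2
      _ = ((n+1 : ℕ) : ℝ) * c := by push_cast; ring

private lemma tendsto_bound {ρ : ℝ → ℝ} (h : Filter.Tendsto ρ Filter.atTop Filter.atTop) (A : ℝ) :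
    ∃ R : ℝ, 0 ≤ R ∧ ∀ t : ℝ, ρ t ≤ A → t ≤ R := by
  obtain ⟨N, hN⟩ := Filter.eventually_atTop.1 (Filter.tendsto_atTop.1 h (A+1))
  refine ⟨max N 0, le_max_right _ _, fun t ht => ?_⟩
  by_contra hc
  push_neg at hc
  have hNt : N ≤ t := le_trans (le_max_left N 0) hc.le
  linarith [hN t hNt]

private lemma geodesic_subdiv {S T : Type*} [MetricSpace S] [MetricSpace T]
    (hS : IsGeodesicSpace S) (h : S → T) (M : ℝ)
    (hloc : ∀ x x' : S, dist x x' ≤ 1 → dist (h x) (h x') ≤ M) :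
    ∀ x x' : S, dist (h x) (h x') ≤ M * dist x x' + M := by
  intro x x'
  have hM : 0 ≤ M := by
    have := hloc x x (by simp)
    simpa using this
  set d := dist x x' with hd
  have hd0 : 0 ≤ d := dist_nonneg
  obtain ⟨γ, hγ0, hγd, hγ⟩ := hS x x'
  set n := ⌈d⌉₊ with hn
  by_cases hn0 : n = 0
  · have hdz : d ≤ 0 := Nat.ceil_eq_zero.mp hn0
    have hdzz : d = 0 := le_antisymm hdz hd0
    have := hloc x x' (by rw [← hd]; simp [hdzz])
    nlinarith
  · have hnpos : 0 < (n : ℝ) := by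
      exact_mod_cast Nat.pos_of_ne_zero hn0
    have hdn0 : 0 ≤ d / n := div_nonneg hd0 hnpos.le
    have hdn1 : d / n ≤ 1 := by
      rw [div_le_one hnpos]
      exact Nat.le_ceil d
    set u : ℕ → T := fun i => h (γ ((i : ℝ) * (d / n))) with hu
    have hmem : ∀ i : ℕ, i ≤ n → (i : ℝ) * (d / n) ∈ Set.Icc (0 : ℝ) d := by
      intro i hi
      constructor
      · positivity
      · have : (i : ℝ) * (d / n) ≤ (n : ℝ) * (d / n) := by
          apply mul_le_mul_of_nonneg_right _ hdn0
          exact_mod_cast hi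
        rwa [mul_div_cancel₀ d hnpos.ne'] at this
    have key : ∀ i, i < n → dist (u i) (u (i+1)) ≤ M := by
      intro i hi
      apply hloc
      have e := hγ _ (hmem i hi.le) _ (hmem (i+1) hi)
      rw [e]
      have : ((i : ℝ) * (d / n) - ((i : ℕ) + 1 : ℕ) * (d / n)) = -(d / n) := by
        push_cast; ring
      rw [this, abs_neg, abs_of_nonneg hdn0]
      exact hdn1
    have hchain := chain_dist u M n key
    have hu0 : u 0 = h x := by simp [hu, hγ0]
    have hun : u n = h x' := by
      have : ((n : ℝ)) * (d / n) = d := mul_div_cancel₀ d hnpos.ne'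
      simp only [hu, this]
      rw [hd, hγd]
    rw [hu0, hun] at hchain
    have hceil : (n : ℝ) ≤ d + 1 := le_of_lt (Nat.ceil_lt_add_one hd0)
    calc dist (h x) (h x') ≤ (n : ℝ) * M := hchain
      _ ≤ (d + 1) * M := mul_le_mul_of_nonneg_right hceil hM
      _ = M * d + M := by ring

private lemma geodesic_lower {S T : Type*} [MetricSpace S] [MetricSpace T]
    (hT : IsGeodesicSpace T) (g : S → T) (R₂ R₃ : ℝ) (hR₂ : 0 ≤ R₂)
    (hcob : ∀ y : T, ∃ x : S, dist y (g x) ≤ R₂)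
    (hloc : ∀ x x' : S, dist (g x) (g x') ≤ 1 + 2*R₂ → dist x x' ≤ R₃) :
    ∀ x x' : S, dist x x' ≤ R₃ * dist (g x) (g x') + R₃ := by
  intro x x'
  have hR₃ : 0 ≤ R₃ := by
    have := hloc x x (by simp; linarith)
    simpa using this
  set d := dist (g x) (g x') with hd
  have hd0 : 0 ≤ d := dist_nonneg
  obtain ⟨γ, hγ0, hγd, hγ⟩ := hT (g x) (g x')
  set n := ⌈d⌉₊ with hn
  by_cases hn0 : n = 0
  · have hdzz : d = 0 := le_antisymm (Nat.ceil_eq_zero.mp hn0) hd0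
    have := hloc x x' (by rw [← hd]; linarith)
    nlinarith
  · have hnpos : 0 < (n : ℝ) := by
      exact_mod_cast Nat.pos_of_ne_zero hn0
    have hdn0 : 0 ≤ d / n := div_nonneg hd0 hnpos.le
    have hdn1 : d / n ≤ 1 := by
      rw [div_le_one hnpos]
      exact Nat.le_ceil d
    set p : ℕ → T := fun i => γ ((i : ℝ) * (d / n)) with hp
    have hmem : ∀ i : ℕ, i ≤ n → (i : ℝ) * (d / n) ∈ Set.Icc (0 : ℝ) d := by
      intro i hi
      constructor
      · positivity
      · have : (i : ℝ) * (d / n) ≤ (n : ℝ) * (d / n) := by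
          apply mul_le_mul_of_nonneg_right _ hdn0
          exact_mod_cast hi
        rwa [mul_div_cancel₀ d hnpos.ne'] at this
    have hpdist : ∀ i, i < n → dist (p i) (p (i+1)) ≤ d / n := by
      intro i hi
      have e := hγ _ (hmem i hi.le) _ (hmem (i+1) hi)
      simp only [hp]
      rw [e]
      have : ((i : ℝ) * (d / n) - ((i : ℕ) + 1 : ℕ) * (d / n)) = -(d / n) := by
        push_cast; ring
      rw [this, abs_neg, abs_of_nonneg hdn0]
    set ξ : ℕ → S := fun i =>
      if i = 0 then x else if n ≤ i then x' else Classical.choose (hcob (p i)) with hξ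
    have hclose : ∀ i, i ≤ n → dist (p i) (g (ξ i)) ≤ R₂ := by
      intro i hi
      by_cases hi0 : i = 0
      · subst hi0
        have : p 0 = g x := by simp [hp, hγ0]
        simp [hξ, this]
        exact hR₂
      · by_cases hin : n ≤ i
        · have hieq : i = n := le_antisymm hi hin
          have hpn : p i = g x' := by
            have hc : ((i : ℝ)) * (d / n) = d := by
              rw [hieq]; exact mul_div_cancel₀ d hnpos.ne'
            simp only [hp]
            rw [hc, hd]
            exact hγd
          rw [hpn]
          simp only [hξ, if_neg hi0, if_pos hin]
          simpa using hR₂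
        · have := Classical.choose_spec (hcob (p i))
          simp only [hξ, if_neg hi0, if_neg hin]
          exact this
    have key : ∀ i, i < n → dist (ξ i) (ξ (i+1)) ≤ R₃ := by
      intro i hi
      apply hloc
      have t4 := dist_triangle4 (g (ξ i)) (p i) (p (i+1)) (g (ξ (i+1)))
      have c1 : dist (g (ξ i)) (p i) ≤ R₂ := by
        rw [dist_comm]; exact hclose i hi.le
      have c2 := hpdist i hi
      have c3 : dist (p (i+1)) (g (ξ (i+1))) ≤ R₂ := hclose (i+1) hi
      linarith
    have hchain := chain_dist ξ R₃ n key
    have hξ0 : ξ 0 = x := by simp [hξ]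
    have hξn : ξ n = x' := by simp [hξ, hn0]
    rw [hξ0, hξn] at hchain
    have hceil : (n : ℝ) ≤ d + 1 := le_of_lt (Nat.ceil_lt_add_one hd0)
    calc dist x x' ≤ (n : ℝ) * R₃ := hchain
      _ ≤ (d + 1) * R₃ := mul_le_mul_of_nonneg_right hceil hR₃
      _ = R₃ * d + R₃ := by ring

/-- Let `X, Y, S, T` be geodesic metric spaces, `f : X → Y` a
quasi-isometry, and `σ : S → X`, `τ : T → Y` uniformly proper maps such that
`f(σ(S))` and `τ(T)` have finite Hausdorff distance.  Then any map `g : S → T` with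
`dist (f (σ x)) (τ (g x))` uniformly bounded is a quasi-isometry. -/
theorem induced_quasi_isometry_on_subspaces
    (X Y S T : Type*) [MetricSpace X] [MetricSpace Y] [MetricSpace S] [MetricSpace T]
    (hX : IsGeodesicSpace X) (hY : IsGeodesicSpace Y)
    (hS : IsGeodesicSpace S) (hT : IsGeodesicSpace T)
    (f : X → Y) (K C : ℝ) (hK : 1 ≤ K) (hC : 0 ≤ C)
    (hf : (∀ x x' : X, dist x x' / K - C ≤ dist (f x) (f x') ∧
        dist (f x) (f x') ≤ K * dist x x' + C) ∧ ∀ y : Y, ∃ x : X, dist y (f x) ≤ C)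
    (ρσ ρτ : ℝ → ℝ) (Kσ Cσ Kτ Cτ : ℝ)
    (σ : S → X) (hσ : IsUniformlyProper ρσ Kσ Cσ σ)
    (τ : T → Y) (hτ : IsUniformlyProper ρτ Kτ Cτ τ)
    (hHaus : EMetric.hausdorffEdist (Set.range (f ∘ σ)) (Set.range τ) ≠ ⊤)
    (g : S → T) (B : ℝ) (hg : ∀ x : S, dist (f (σ x)) (τ (g x)) ≤ B) :
    ∃ K' C' : ℝ, 1 ≤ K' ∧ 0 ≤ C' ∧
      (∀ x x' : S, dist x x' / K' - C' ≤ dist (g x) (g x') ∧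
        dist (g x) (g x') ≤ K' * dist x x' + C') ∧
      ∀ y : T, ∃ x : S, dist y (g x) ≤ C' := by
  obtain ⟨hρσ, hσb⟩ := hσ
  obtain ⟨hρτ, hτb⟩ := hτ
  by_cases hne : Nonempty S
  case neg =>
    have hES : IsEmpty S := not_nonempty_iff.mp hne
    refine ⟨1, 0, le_refl 1, le_refl 0, fun x _ => isEmptyElim x, fun y => ?_⟩
    have h1 : (Set.range (f ∘ σ)).Nonempty := by
      apply EMetric.nonempty_of_hausdorffEdist_ne_top (s := Set.range τ) ⟨τ y, Set.mem_range_self y⟩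
      rw [EMetric.hausdorffEdist_comm]
      exact hHaus
    obtain ⟨z, x, hx⟩ := h1
    exact isEmptyElim x
  case pos =>
    obtain ⟨x₀⟩ := hne
    have hB : 0 ≤ B := le_trans dist_nonneg (hg x₀)
    have hK0 : (0 : ℝ) < K := lt_of_lt_of_le one_pos hK
    -- Step 1: upper bound for g
    obtain ⟨R₁, hR₁0, hR₁⟩ := tendsto_bound hρτ (2*B + K*(|Kσ| + Cσ) + C)
    have hlocU : ∀ x x' : S, dist x x' ≤ 1 → dist (g x) (g x') ≤ R₁ := by
      intro x x' hxx
      apply hR₁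
      have e1 : dist (σ x) (σ x') ≤ |Kσ| + Cσ := by
        have h1 := (hσb x x').2
        have h2 : Kσ * dist x x' ≤ |Kσ| * dist x x' :=
          mul_le_mul_of_nonneg_right (le_abs_self Kσ) dist_nonneg
        have h3 : |Kσ| * dist x x' ≤ |Kσ| * 1 :=
          mul_le_mul_of_nonneg_left hxx (abs_nonneg Kσ)
        linarith
      have e2 : dist (f (σ x)) (f (σ x')) ≤ K * (|Kσ| + Cσ) + C := by
        have h1 := (hf.1 (σ x) (σ x')).2
        have h2 : K * dist (σ x) (σ x') ≤ K * (|Kσ| + Cσ) :=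
          mul_le_mul_of_nonneg_left e1 hK0.le
        linarith
      have t4 := dist_triangle4 (τ (g x)) (f (σ x)) (f (σ x')) (τ (g x'))
      have b1 : dist (τ (g x)) (f (σ x)) ≤ B := by rw [dist_comm]; exact hg x
      have b2 := hg x'
      have e3 := (hτb (g x) (g x')).1
      linarith
    have hupper := geodesic_subdiv hS g R₁ hlocU
    -- Step 2: coarse surjectivity of g
    set e := EMetric.hausdorffEdist (Set.range (f ∘ σ)) (Set.range τ) with he
    set D := (e + 1).toReal with hD
    obtain ⟨R₂, hR₂0, hR₂⟩ := tendsto_bound hρτ (D + B)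
    have hcob : ∀ y : T, ∃ x : S, dist y (g x) ≤ R₂ := by
      intro y
      have h1 : EMetric.infEdist (τ y) (Set.range (f ∘ σ)) ≤ e := by
        rw [he, EMetric.hausdorffEdist, Metric.hausdorffEDist_comm]
        exact EMetric.infEdist_le_hausdorffEdist_of_mem (Set.mem_range_self y)
      have h2 : EMetric.infEdist (τ y) (Set.range (f ∘ σ)) < e + 1 :=
        lt_of_le_of_lt h1 (ENNReal.lt_add_right hHaus one_ne_zero)
      obtain ⟨z, hz, hz2⟩ := EMetric.infEdist_lt_iff.mp h2
      obtain ⟨x, hx⟩ := hz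
      refine ⟨x, hR₂ _ ?_⟩
      have hdz : dist (τ y) (f (σ x)) ≤ D := by
        rw [dist_edist]
        apply ENNReal.toReal_mono (by simp [hHaus])
        rw [show f (σ x) = z from hx]
        exact hz2.le
      have t := dist_triangle (τ y) (f (σ x)) (τ (g x))
      have e3 := (hτb y (g x)).1
      have := hg x
      linarith
    -- Step 3: lower local bound
    obtain ⟨R₃, hR₃0, hR₃⟩ :=
      tendsto_bound hρσ (K * (2*B + |Kτ| * (1 + 2*R₂) + Cτ + C))
    have hlocL : ∀ x x' : S, dist (g x) (g x') ≤ 1 + 2*R₂ → dist x x' ≤ R₃ := by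
      intro x x' hgx
      apply hR₃
      have e1 : dist (τ (g x)) (τ (g x')) ≤ |Kτ| * (1 + 2*R₂) + Cτ := by
        have h1 := (hτb (g x) (g x')).2
        have h2 : Kτ * dist (g x) (g x') ≤ |Kτ| * dist (g x) (g x') :=
          mul_le_mul_of_nonneg_right (le_abs_self Kτ) dist_nonneg
        have h3 : |Kτ| * dist (g x) (g x') ≤ |Kτ| * (1 + 2*R₂) :=
          mul_le_mul_of_nonneg_left hgx (abs_nonneg Kτ)
        linarith
      have t4 := dist_triangle4 (f (σ x)) (τ (g x)) (τ (g x')) (f (σ x'))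
      have b1 := hg x
      have b2 : dist (τ (g x')) (f (σ x')) ≤ B := by rw [dist_comm]; exact hg x'
      have e2 : dist (f (σ x)) (f (σ x')) ≤ 2*B + |Kτ| * (1 + 2*R₂) + Cτ := by
        linarith
      have h4 := (hf.1 (σ x) (σ x')).1
      have h5 : dist (σ x) (σ x') ≤ K * (2*B + |Kτ| * (1 + 2*R₂) + Cτ + C) := by
        have h6 : dist (σ x) (σ x') / K ≤ 2*B + |Kτ| * (1 + 2*R₂) + Cτ + C := by
          linarith
        rw [div_le_iff₀ hK0] at h6
        nlinarith
      exact le_trans (hσb x x').1 h5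
    have hlower := geodesic_lower hT g R₂ R₃ hR₂0 hcob hlocL
    -- Conclusion
    refine ⟨R₁ + R₃ + 2, R₁ + R₂ + R₃ + 1, by linarith, by linarith, ?_, ?_⟩
    · intro x x'
      set K' := R₁ + R₃ + 2 with hK'
      set C' := R₁ + R₂ + R₃ + 1 with hC'
      have hK'pos : 0 < K' := by rw [hK']; linarith
      constructor
      · have h1 := hlower x x'
        have hdg : 0 ≤ dist (g x) (g x') := dist_nonneg
        have h2 : dist x x' ≤ (dist (g x) (g x') + C') * K' := by
          rw [hK', hC']; nlinarith
        have h3 : dist x x' / K' ≤ dist (g x) (g x') + C' :=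
          (div_le_iff₀ hK'pos).mpr h2
        linarith
      · have h1 := hupper x x'
        have hd : 0 ≤ dist x x' := dist_nonneg
        rw [hK', hC']; nlinarith
    · intro y
      obtain ⟨x, hx⟩ := hcob y
      exact ⟨x, by linarith⟩
end

section
/- A matrix M ∈ GL(n,ℝ) lies on a one-parameter subgroup of GL(n,ℝ) if and only if M has a square root in GL(n,ℝ). In particular, for every M ∈ GL(n,ℝ), the matrix M² lies on a one-parameter subgroup of GL(n,ℝ). -/
/-- A one-parameter subgroup of `GL(n,ℝ)`, viewed as a continuous family of matrices:
a continuous homomorphism `ρ : ℝ → GL(n,ℝ)`. -/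
def IsOneParamSubgroup {n : ℕ} (ρ : ℝ → Matrix (Fin n) (Fin n) ℝ) : Prop :=
  Continuous ρ ∧ ρ 0 = 1 ∧ (∀ s t : ℝ, ρ (s + t) = ρ s * ρ t) ∧ ∀ t, IsUnit (ρ t)

open Polynomial NormedSpace

noncomputable section
namespace OneParamSq

/-- Truncated logarithm series `∑_{i<K-1} (-1)^i X^(i+1)/(i+1)`. -/
def logP (K : ℕ) : ℝ[X] :=
  ∑ i ∈ Finset.range (K - 1), C ((-1 : ℝ) ^ i / (i + 1)) * X ^ (i + 1)

/-- Truncated exponential of the truncated logarithm. -/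
def expP (K : ℕ) : ℝ[X] :=
  ∑ m ∈ Finset.range K, C ((m.factorial : ℝ))⁻¹ * logP K ^ m

lemma X_dvd_logP (K : ℕ) : (X : ℝ[X]) ∣ logP K := by
  refine Finset.dvd_sum fun i _ => ?_
  exact Dvd.dvd.mul_left (dvd_pow_self X (Nat.succ_ne_zero i)) _

lemma deriv_logP (K : ℕ) :
    derivative (logP K) = ∑ i ∈ Finset.range (K - 1), (-X : ℝ[X]) ^ i := by
  unfold logP
  rw [derivative_sum]
  refine Finset.sum_congr rfl fun i _ => ?_
  rw [derivative_C_mul_X_pow, Nat.add_sub_cancel,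
    show ((-X : ℝ[X])) ^ i = (-1 : ℝ[X]) ^ i * X ^ i from neg_pow _ _]
  have h1 : ((-1 : ℝ) ^ i / (↑i + 1) * ↑(i + 1)) = (-1 : ℝ) ^ i := by
    push_cast
    have : (i : ℝ) + 1 ≠ 0 := by positivity
    field_simp
  rw [h1]
  congr 1
  rw [map_pow, map_neg, map_one]

lemma geom_aux (K : ℕ) :
    (∑ i ∈ Finset.range (K - 1), (-X : ℝ[X]) ^ i) * (1 + X) = 1 - (-X) ^ (K - 1) := by
  linear_combination -geom_sum_mul (-X : ℝ[X]) (K - 1)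

lemma deriv_expP (K : ℕ) (hK : 1 ≤ K) :
    derivative (expP K) = (∑ i ∈ Finset.range (K - 1), (-X : ℝ[X]) ^ i) *
      (expP K - C (((K - 1).factorial : ℝ))⁻¹ * logP K ^ (K - 1)) := by
  obtain ⟨K', rfl⟩ : ∃ K', K = K' + 1 := ⟨K - 1, (Nat.succ_pred_eq_of_pos hK).symm⟩
  simp only [Nat.add_sub_cancel]
  have hV := deriv_logP (K' + 1)
  simp only [Nat.add_sub_cancel] at hV
  set V : ℝ[X] := ∑ i ∈ Finset.range K', (-X : ℝ[X]) ^ i with hVdef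
  set L : ℝ[X] := logP (K' + 1) with hLdef
  have h1 : derivative (expP (K' + 1)) =
      ∑ m ∈ Finset.range (K' + 1),
        C ((m.factorial : ℝ))⁻¹ * (C (m : ℝ) * L ^ (m - 1) * V) := by
    unfold expP
    rw [derivative_sum]
    refine Finset.sum_congr rfl fun m _ => ?_
    rw [derivative_mul, derivative_C, zero_mul, zero_add, derivative_pow, hV]
  rw [h1, Finset.sum_range_succ' _ K']
  have h0 : C ((Nat.factorial 0 : ℝ))⁻¹ * (C ((0 : ℕ) : ℝ) * L ^ (0 - 1) * V) = 0 := by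
    simp
  rw [h0, add_zero]
  have h2 : ∀ i, C (((i + 1).factorial : ℝ))⁻¹ * (C ((i + 1 : ℕ) : ℝ) * L ^ (i + 1 - 1) * V)
      = (C ((i.factorial : ℝ))⁻¹ * L ^ i) * V := by
    intro i
    have hfac : (((i + 1).factorial : ℝ))⁻¹ * ((i + 1 : ℕ) : ℝ) = ((i.factorial : ℝ))⁻¹ := by
      rw [Nat.factorial_succ]
      push_cast
      have h3 : (i : ℝ) + 1 ≠ 0 := by positivity
      have h4 : (i.factorial : ℝ) ≠ 0 := by positivity
      field_simp
    have hC : C ((((i + 1).factorial : ℝ))⁻¹) * C (((i + 1 : ℕ)) : ℝ)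
        = C ((i.factorial : ℝ))⁻¹ := by
      rw [← map_mul, hfac]
    simp only [Nat.add_sub_cancel]
    linear_combination (L ^ i * V) * hC
  simp only [h2]
  rw [← Finset.sum_mul]
  have hsplit : expP (K' + 1) = (∑ m ∈ Finset.range K', C ((m.factorial : ℝ))⁻¹ * L ^ m)
      + C ((K'.factorial : ℝ))⁻¹ * L ^ K' := by
    unfold expP
    rw [Finset.sum_range_succ]
  rw [hsplit]
  ring

lemma key_dvd (K : ℕ) : (X : ℝ[X]) ^ K ∣ expP K - (1 + X) := by
  rcases Nat.eq_zero_or_pos K with rfl | hK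
  · simp
  obtain ⟨Q, hQ⟩ := X_dvd_logP K
  set P : ℝ[X] := expP K with hPdef
  set D : ℝ[X] := P - (1 + X) with hDdef
  have hLpow : logP K ^ (K - 1) = X ^ (K - 1) * Q ^ (K - 1) := by rw [hQ, mul_pow]
  -- the key differential relation
  obtain ⟨W, hW⟩ : ∃ W : ℝ[X], (1 + X) * derivative D = D + X ^ (K - 1) * W := by
    refine ⟨-((-1 : ℝ[X]) ^ (K - 1) * P) -
      (1 - (-X) ^ (K - 1)) * C (((K - 1).factorial : ℝ))⁻¹ * Q ^ (K - 1), ?_⟩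
    have hD' : derivative D = derivative P - 1 := by
      rw [hDdef, derivative_sub]
      simp
    have hneg : ((-X : ℝ[X])) ^ (K - 1) = (-1 : ℝ[X]) ^ (K - 1) * X ^ (K - 1) := neg_pow _ _
    have hg2 : (∑ i ∈ Finset.range (K - 1), (-X : ℝ[X]) ^ i) * (1 + X)
        = 1 - (-1 : ℝ[X]) ^ (K - 1) * X ^ (K - 1) := by
      rw [← hneg]; exact geom_aux K
    rw [hD', hPdef, deriv_expP K hK, hLpow, hneg]
    linear_combination (expP K - C (((K - 1).factorial : ℝ))⁻¹ *
      (X ^ (K - 1) * Q ^ (K - 1))) * hg2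
  -- induction
  have main : ∀ i, i ≤ K → (X : ℝ[X]) ^ i ∣ D := by
    intro i
    induction i with
    | zero => simp
    | succ i ih =>
      intro hik
      obtain ⟨E, hE⟩ := ih (le_trans (Nat.le_succ i) hik)
      rcases Nat.eq_zero_or_pos i with rfl | hi
      · -- show X ∣ D via eval at 0
        rw [pow_one]
        rw [X_dvd_iff, coeff_zero_eq_eval_zero]
        have hL0 : (logP K).eval 0 = 0 := by rw [hQ]; simp
        have hP0 : P.eval 0 = 1 := by
          rw [hPdef]
          unfold expP
          rw [eval_finset_sum]
          rw [Finset.sum_eq_single 0]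
          · simp
          · intro m _ hm
            simp [hL0, zero_pow hm]
          · intro h
            exact absurd (Finset.mem_range.2 hK) h
        rw [hDdef]
        simp [hP0]
      · -- main step
        have hKi : K - 1 = (i - 1) + (K - i) := by omega
        have hii : i = (i - 1) + 1 := by omega
        have hD' : derivative D = C (i : ℝ) * X ^ (i - 1) * E + X ^ i * derivative E := by
          rw [hE, derivative_mul, derivative_X_pow]
        have hcan : (X : ℝ[X]) ^ (i - 1) * ((1 + X) * (C (i : ℝ) * E + X * derivative E)) =
            X ^ (i - 1) * (X * E + X ^ (K - i) * W) := by
          have h5 : (1 + X) * derivative D = D + X ^ (K - 1) * W := hW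
          rw [hD', hE] at h5
          calc (X : ℝ[X]) ^ (i - 1) * ((1 + X) * (C (i : ℝ) * E + X * derivative E))
              = (1 + X) * (C (i : ℝ) * X ^ (i - 1) * E + (X ^ (i-1) * X) * derivative E) := by
                ring
            _ = (1 + X) * (C (i : ℝ) * X ^ (i - 1) * E + X ^ i * derivative E) := by
                rw [← pow_succ, ← hii]
            _ = X ^ i * E + X ^ (K - 1) * W := h5
            _ = (X ^ (i-1) * X) * E + (X ^ (i-1) * X ^ (K - i)) * W := by
                rw [← pow_succ, ← hii, ← pow_add, ← hKi]
            _ = X ^ (i - 1) * (X * E + X ^ (K - i) * W) := by ring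
        have heq := mul_left_cancel₀ (pow_ne_zero (i - 1) (X_ne_zero (R := ℝ))) hcan
        have hev := congrArg (eval 0) heq
        simp only [eval_mul, eval_add, eval_one, eval_X, eval_C, eval_pow] at hev
        rw [zero_pow (by omega : K - i ≠ 0)] at hev
        simp only [mul_zero, zero_mul, add_zero, zero_add, one_mul, mul_one] at hev
        -- hev : (i:ℝ) * E.eval 0 + ... = 0  (roughly)
        have hE0 : E.eval 0 = 0 := by
          have hine : (i : ℝ) ≠ 0 := Nat.cast_ne_zero.2 (by omega)
          rcases mul_eq_zero.mp hev with h | h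
          · exact absurd h hine
          · exact h
        have hXE : (X : ℝ[X]) ∣ E := X_dvd_iff.mpr (by rwa [coeff_zero_eq_eval_zero])
        obtain ⟨E1, hE1⟩ := hXE
        refine ⟨E1, ?_⟩
        rw [hE, hE1, pow_succ]
        ring
  exact main K le_rfl


section Inner

attribute [local instance] Matrix.linftyOpNormedAddCommGroup Matrix.linftyOpNormedRing
  Matrix.linftyOpNormedAlgebra

variable {n : ℕ}

local notation "Mat" => Matrix (Fin n) (Fin n) ℂ

lemma aeval_commute (B : Mat) (p q : ℂ[X]) :
    Commute (aeval B p) (aeval B q) := by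
  show aeval B p * aeval B q = aeval B q * aeval B p
  rw [← map_mul, ← map_mul, mul_comm]

lemma exp_eq_sum_of_nilpotent {K : ℕ} (N : Mat) (hK : N ^ K = 0) :
    exp N = ∑ m ∈ Finset.range K, ((m.factorial : ℂ))⁻¹ • N ^ m := by
  rw [exp_eq_tsum ℂ]
  refine tsum_eq_sum ?_
  intro m hm
  have hKm : K ≤ m := le_of_not_gt fun h => hm (Finset.mem_range.mpr h)
  have h1 : N ^ m = 0 := pow_eq_zero_of_le hKm hK
  simp [h1]

lemma exp_smul_idem (E : Mat) (hE : E * E = E) (μ : ℂ) :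
    exp (μ • E) = 1 + (Complex.exp μ - 1) • E := by
  have hpow : ∀ m : ℕ, m ≠ 0 → (μ • E) ^ m = (μ ^ m) • E := by
    intro m hm
    induction m with
    | zero => simp at hm
    | succ m ih =>
      rcases Nat.eq_zero_or_pos m with rfl | hm'
      · simp
      · rw [pow_succ, ih (by omega), smul_mul_smul_comm, hE, ← pow_succ]
  have hsummable : Summable (fun m : ℕ => ((m.factorial : ℂ))⁻¹ * μ ^ m) := by
    simpa [smul_eq_mul] using expSeries_summable' (𝕂 := ℂ) (𝔸 := ℂ) μ
  have h1 : HasSum (fun m : ℕ => ((m.factorial : ℂ))⁻¹ * μ ^ m) (Complex.exp μ) := by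
    have h := hsummable.hasSum
    have hval : ∑' m : ℕ, ((m.factorial : ℂ))⁻¹ * μ ^ m = Complex.exp μ := by
      rw [Complex.exp_eq_exp_ℂ, exp_eq_tsum ℂ]
      simp [smul_eq_mul]
    rwa [hval] at h
  have h2 := h1.smul_const E
  have h3 : HasSum (fun m : ℕ => if m = 0 then (1 - E : Mat) else 0) (1 - E) :=
    hasSum_ite_eq 0 _
  have h4 := h2.add h3
  have h5 : (fun m : ℕ => (((m.factorial : ℂ))⁻¹ * μ ^ m) • E
      + if m = 0 then (1 - E : Mat) else 0)
      = fun m : ℕ => ((m.factorial : ℂ))⁻¹ • (μ • E) ^ m := by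
    funext m
    rcases Nat.eq_zero_or_pos m with rfl | hm
    · simp
    · rw [hpow m (by omega)]
      rw [if_neg (by omega : ¬ m = 0), add_zero, smul_smul]
  rw [h5] at h4
  have h6 := h4.tsum_eq
  rw [exp_eq_tsum ℂ]
  dsimp only
  rw [h6, sub_smul, one_smul]
  abel

def logPC (K : ℕ) : ℂ[X] := (logP K).map (algebraMap ℝ ℂ)

lemma exp_aeval_logPC {K : ℕ} (N : Mat) (hK : N ^ K = 0) :
    exp (aeval N (logPC K)) = 1 + N := by
  obtain ⟨Q0, hQ0⟩ := X_dvd_logP K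
  have hXdvdC : (X : ℂ[X]) ∣ logPC K := by
    refine ⟨Q0.map (algebraMap ℝ ℂ), ?_⟩
    rw [logPC, hQ0, Polynomial.map_mul, map_X]
  obtain ⟨Q, hQ⟩ := hXdvdC
  have hlK : (aeval N (logPC K)) ^ K = 0 := by
    rw [hQ, map_mul, aeval_X]
    have hc : Commute N (aeval N Q) := by simpa using aeval_commute N X Q
    rw [hc.mul_pow, hK, zero_mul]
  rw [exp_eq_sum_of_nilpotent _ hlK]
  -- rewrite the sum as aeval of expP
  have hsum : ∑ m ∈ Finset.range K, ((m.factorial : ℂ))⁻¹ • (aeval N (logPC K)) ^ m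
      = aeval N ((expP K).map (algebraMap ℝ ℂ)) := by
    simp only [logPC]
    rw [expP, Polynomial.map_sum, map_sum]
    refine Finset.sum_congr rfl fun m _ => ?_
    rw [Polynomial.map_mul, Polynomial.map_pow, map_C, map_mul, aeval_C, map_pow]
    rw [map_inv₀, map_natCast, ← Algebra.smul_def]
  rw [hsum]
  obtain ⟨r, hr⟩ := key_dvd K
  have hrC : (expP K).map (algebraMap ℝ ℂ) = (1 + X) + X ^ K * (r.map (algebraMap ℝ ℂ)) := by
    have h7 : expP K = (1 + X) + X ^ K * r := by
      linear_combination hr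
    rw [h7]
    simp [Polynomial.map_add, Polynomial.map_mul, Polynomial.map_pow, Polynomial.map_one]
  rw [hrC, map_add, map_add, map_one, aeval_X, map_mul, map_pow, aeval_X, hK, zero_mul, add_zero]


lemma block_mul {R : Type*} [Ring R] (b x y : R) (hbx : Commute b x) (hxy : x * y = 0) :
    (1 - x + b * x) * (1 - y + b * y) = 1 - (x + y) + b * (x + y) := by
  have hxy' : x * (b * y) = 0 := by rw [← mul_assoc, ← hbx.eq, mul_assoc, hxy, mul_zero]
  simp only [mul_add, add_mul, mul_sub, sub_mul, mul_one, one_mul, mul_assoc, hxy, hxy',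
    mul_zero, zero_mul, add_zero, sub_zero, zero_add]
  abel

lemma exists_poly_exp_eq (B : Mat) (hB : IsUnit B) :
    ∃ p : ℂ[X], exp (aeval B p) = B := by
  classical
  have hInt : IsIntegral ℂ B := IsIntegral.of_finite ℂ B
  set m : ℂ[X] := minpoly ℂ B with hm
  have hmon : m.Monic := minpoly.monic hInt
  have hmne : m ≠ 0 := hmon.ne_zero
  have haevalm : aeval B m = 0 := minpoly.aeval ℂ B
  set s := m.roots with hs
  set t := s.toFinset with ht
  have hfac : m = ∏ μ ∈ t, (X - C μ) ^ s.count μ := by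
    conv_lhs => rw [(IsAlgClosed.splits m).eq_prod_roots_of_monic hmon]
    rw [Finset.prod_multiset_map_count]
  have hroot0 : ∀ μ ∈ t, μ ≠ 0 := by
    intro μ hμ h0
    subst h0
    have hmem : (0 : ℂ) ∈ s := Multiset.mem_toFinset.mp hμ
    have hroot : m.IsRoot 0 := Polynomial.isRoot_of_mem_roots hmem
    have hXdvd : (X : ℂ[X]) ∣ m := X_dvd_iff.mpr (by rwa [coeff_zero_eq_eval_zero])
    obtain ⟨q, hq⟩ := hXdvd
    have hq0 : aeval B q = 0 := by
      rw [hq, map_mul, aeval_X] at haevalm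
      have h2 := congrArg (fun z => B⁻¹ * z) haevalm
      simp only [mul_zero] at h2
      rwa [← mul_assoc, Matrix.nonsing_inv_mul B ((Matrix.isUnit_iff_isUnit_det B).mp hB),
        one_mul] at h2
    have hdvdq : m ∣ q := minpoly.dvd ℂ B hq0
    have hqne : q ≠ 0 := by rintro rfl; rw [mul_zero] at hq; exact hmne hq
    have h1 := Polynomial.natDegree_le_of_dvd hdvdq hqne
    have h2 : m.natDegree = 1 + q.natDegree := by
      rw [hq, Polynomial.natDegree_mul X_ne_zero hqne, natDegree_X]
    omega
  have hcount : ∀ μ ∈ t, 1 ≤ s.count μ := fun μ hμ =>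
    Multiset.one_le_count_iff_mem.mpr (Multiset.mem_toFinset.mp hμ)
  set g : ℂ → ℂ[X] := fun μ => (X - C μ) ^ s.count μ with hg
  have hgcop : ∀ μ ∈ t, ∀ ν ∈ t, μ ≠ ν → IsCoprime (g μ) (g ν) := by
    intro μ _ ν _ hne
    exact (isCoprime_X_sub_C_of_isUnit_sub ((sub_ne_zero_of_ne hne).isUnit)).pow
  have hdvdm : ∀ r : ℂ[X], (∀ μ ∈ t, g μ ∣ r) → m ∣ r := by
    intro r hr
    rw [hfac]
    exact Finset.prod_dvd_of_coprime (fun μ hμ ν hν hne => hgcop μ hμ ν hν hne) hr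
  have haeval0 : ∀ r : ℂ[X], m ∣ r → aeval B r = 0 := by
    rintro r ⟨c, hc⟩
    rw [hc, map_mul, haevalm, zero_mul]
  -- construct the idempotent-generating polynomials
  have hexists : ∀ μ : ℂ, ∃ e : ℂ[X],
      μ ∈ t → (g μ ∣ e - 1 ∧ ∀ ν ∈ t, ν ≠ μ → g ν ∣ e) := by
    intro μ
    by_cases hμ : μ ∈ t
    · obtain ⟨a, b, hab⟩ : IsCoprime (g μ) (∏ ν ∈ t.erase μ, g ν) := by
        refine IsCoprime.prod_right fun ν hν => ?_
        exact hgcop μ hμ ν (Finset.mem_of_mem_erase hν) (Ne.symm (Finset.ne_of_mem_erase hν))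
      refine ⟨b * ∏ ν ∈ t.erase μ, g ν, fun _ => ⟨⟨-a, ?_⟩, fun ν hν hne => ?_⟩⟩
      · linear_combination hab
      · exact Dvd.dvd.mul_left (Finset.dvd_prod_of_mem g (Finset.mem_erase.mpr ⟨hne, hν⟩)) b
    · exact ⟨0, fun h => absurd h hμ⟩
  choose e he using hexists
  have he1 : ∀ μ ∈ t, g μ ∣ e μ - 1 := fun μ hμ => (he μ hμ).1
  have he2 : ∀ μ ∈ t, ∀ ν ∈ t, ν ≠ μ → g ν ∣ e μ := fun μ hμ => (he μ hμ).2
  -- key matrix identities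
  have hsumE : ∑ μ ∈ t, aeval B (e μ) = 1 := by
    have hdvd : m ∣ (∑ μ ∈ t, e μ) - 1 := by
      refine hdvdm _ fun μ hμ => ?_
      have hsplit : (∑ ν ∈ t, e ν) - 1 = (e μ - 1) + ∑ ν ∈ t.erase μ, e ν := by
        rw [← Finset.add_sum_erase t e hμ]; ring
      rw [hsplit]
      exact dvd_add (he1 μ hμ)
        (Finset.dvd_sum fun ν hν => he2 ν (Finset.mem_of_mem_erase hν) μ hμ
          (Finset.ne_of_mem_erase hν).symm)
    have h3 := haeval0 _ hdvd
    rw [map_sub, map_one, map_sum, sub_eq_zero] at h3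
    exact h3
  have horth : ∀ μ ∈ t, ∀ ν ∈ t, μ ≠ ν → aeval B (e μ) * aeval B (e ν) = 0 := by
    intro μ hμ ν hν hne
    rw [← map_mul]
    refine haeval0 _ (hdvdm _ fun κ hκ => ?_)
    rcases eq_or_ne κ μ with rfl | hkμ
    · exact Dvd.dvd.mul_left (he2 ν hν κ hκ hne) _
    · exact Dvd.dvd.mul_right (he2 μ hμ κ hκ hkμ) _
  have hidem : ∀ μ ∈ t, aeval B (e μ) * aeval B (e μ) = aeval B (e μ) := by
    intro μ hμ
    rw [← map_mul, ← sub_eq_zero, ← map_sub]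
    refine haeval0 _ (hdvdm _ fun κ hκ => ?_)
    rcases eq_or_ne κ μ with rfl | hkμ
    · have h4 : e κ * e κ - e κ = (e κ - 1) * e κ := by ring
      rw [h4]; exact (he1 κ hκ).mul_right _
    · have h4 : e μ * e μ - e μ = (e μ - 1) * e μ := by ring
      rw [h4]; exact ((he2 μ hμ κ hκ hkμ)).mul_left _
  set nu : ℂ → ℂ[X] := fun μ => (C μ⁻¹ * X - 1) * e μ with hnu
  have hnuNil : ∀ μ ∈ t, (aeval B (nu μ)) ^ s.count μ = 0 := by
    intro μ hμ
    rw [← map_pow]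
    refine haeval0 _ (hdvdm _ fun κ hκ => ?_)
    rcases eq_or_ne κ μ with rfl | hkμ
    · have hfactor : C κ⁻¹ * X - 1 = C κ⁻¹ * (X - C κ) := by
        rw [mul_sub, ← map_mul, inv_mul_cancel₀ (hroot0 κ hκ), map_one]
      simp only [hnu]
      rw [hfactor, mul_pow, mul_pow]
      exact Dvd.dvd.mul_right (Dvd.dvd.mul_left dvd_rfl _) _
    · simp only [hnu]
      rw [mul_pow]
      exact Dvd.dvd.mul_left
        ((he2 μ hμ κ hκ hkμ).trans (dvd_pow_self _ (by have := hcount μ hμ; omega))) _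
  have hEN : ∀ μ ∈ t, aeval B (e μ) * aeval B (nu μ) = aeval B (nu μ) := by
    intro μ hμ
    rw [← map_mul, ← sub_eq_zero, ← map_sub]
    refine haeval0 _ (hdvdm _ fun κ hκ => ?_)
    rcases eq_or_ne κ μ with rfl | hkμ
    · have h4 : e κ * nu κ - nu κ = (e κ - 1) * ((C κ⁻¹ * X - 1) * e κ) := by
        simp only [hnu]; ring
      rw [h4]; exact (he1 κ hκ).mul_right _
    · have h4 : e μ * nu μ - nu μ = ((C μ⁻¹ * X - 1) * (e μ - 1)) * e μ := by
        simp only [hnu]; ring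
      rw [h4]; exact (he2 μ hμ κ hκ hkμ).mul_left _
  -- block polynomials
  set cp : ℂ → ℂ[X] := fun μ => C (Complex.log μ) * e μ + (logPC (s.count μ)).comp (nu μ)
    with hcp
  have hblock : ∀ μ ∈ t,
      exp (aeval B (cp μ)) = 1 - aeval B (e μ) + B * aeval B (e μ) := by
    intro μ hμ
    have hsplit : aeval B (cp μ) = Complex.log μ • aeval B (e μ)
        + aeval (aeval B (nu μ)) (logPC (s.count μ)) := by
      simp only [hcp]
      rw [map_add, map_mul, aeval_C, aeval_comp, Algebra.smul_def]
    have hcomm : Commute (Complex.log μ • aeval B (e μ))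
        (aeval (aeval B (nu μ)) (logPC (s.count μ))) := by
      rw [← aeval_comp]
      exact (aeval_commute B (e μ) _).smul_left _
    rw [hsplit, Matrix.exp_add_of_commute _ _ hcomm]
    rw [exp_smul_idem _ (hidem μ hμ) _, exp_aeval_logPC _ (hnuNil μ hμ),
      Complex.exp_log (hroot0 μ hμ)]
    have hNform : aeval B (nu μ) = μ⁻¹ • (B * aeval B (e μ)) - aeval B (e μ) := by
      simp only [hnu]
      rw [map_mul, map_sub, map_mul, aeval_X, aeval_C, map_one, Algebra.smul_def, sub_mul,
        one_mul, mul_assoc]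
    have hNform2 : μ • aeval B (nu μ) = B * aeval B (e μ) - μ • aeval B (e μ) := by
      rw [hNform, smul_sub, smul_smul, mul_inv_cancel₀ (hroot0 μ hμ), one_smul]
    have hmul : (1 + (μ - 1) • aeval B (e μ)) * (1 + aeval B (nu μ))
        = 1 + aeval B (nu μ) + (μ - 1) • aeval B (e μ)
          + (μ - 1) • (aeval B (e μ) * aeval B (nu μ)) := by
      rw [add_mul, one_mul, mul_add, mul_one, smul_mul_assoc]
      abel
    rw [hmul, hEN μ hμ]
    have h8 : aeval B (nu μ) + (μ - 1) • aeval B (nu μ) = μ • aeval B (nu μ) := by module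
    calc 1 + aeval B (nu μ) + (μ - 1) • aeval B (e μ) + (μ - 1) • aeval B (nu μ)
        = 1 + (aeval B (nu μ) + (μ - 1) • aeval B (nu μ)) + (μ - 1) • aeval B (e μ) := by
          abel
      _ = 1 + (B * aeval B (e μ) - μ • aeval B (e μ)) + (μ - 1) • aeval B (e μ) := by
          rw [h8, hNform2]
      _ = 1 - aeval B (e μ) + B * aeval B (e μ) := by module
  -- product over all roots
  have hprod : ∀ u : Finset ℂ, u ⊆ t →
      exp (∑ μ ∈ u, aeval B (cp μ)) =
        1 - (∑ μ ∈ u, aeval B (e μ)) + B * (∑ μ ∈ u, aeval B (e μ)) := by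
    intro u
    induction u using Finset.induction_on with
    | empty => intro _; simp [NormedSpace.exp_zero]
    | @insert a u ha ih =>
      intro hsub
      have hat : a ∈ t := hsub (Finset.mem_insert_self a u)
      have hut : u ⊆ t := fun x hx => hsub (Finset.mem_insert_of_mem hx)
      rw [Finset.sum_insert ha, Finset.sum_insert ha]
      have hcomm : Commute (aeval B (cp a)) (∑ μ ∈ u, aeval B (cp μ)) :=
        Commute.sum_right _ _ _ fun ν _ => aeval_commute B _ _
      rw [Matrix.exp_add_of_commute _ _ hcomm, hblock a hat, ih hut]
      have hbx : Commute B (aeval B (e a)) := by simpa using aeval_commute B X (e a)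
      have hxy : aeval B (e a) * (∑ μ ∈ u, aeval B (e μ)) = 0 := by
        rw [Finset.mul_sum]
        exact Finset.sum_eq_zero fun ν hν =>
          horth a hat ν (hut hν) (fun h => ha (h ▸ hν))
      exact block_mul B _ _ hbx hxy
  refine ⟨∑ μ ∈ t, cp μ, ?_⟩
  rw [map_sum, hprod t (subset_refl t), hsumE]
  simp


lemma exists_real_log_inner (A : Matrix (Fin n) (Fin n) ℝ) (hA : IsUnit A) :
    ∃ L : Matrix (Fin n) (Fin n) ℝ, exp L = A * A := by
  set Ψ : Matrix (Fin n) (Fin n) ℝ →+* Mat := (Complex.ofRealHom).mapMatrix with hΨ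
  set Φ : Mat →+* Mat := ((starRingEnd ℂ)).mapMatrix with hΦ
  have hΨc : Continuous Ψ := by
    show Continuous fun M : Matrix (Fin n) (Fin n) ℝ => M.map Complex.ofRealHom
    exact continuous_id.matrix_map Complex.continuous_ofReal
  have hΦc : Continuous Φ := by
    show Continuous fun M : Mat => M.map (starRingEnd ℂ)
    exact continuous_id.matrix_map Complex.continuous_conj
  have hBu : IsUnit (Ψ A) := hA.map Ψ
  obtain ⟨p, hp⟩ := exists_poly_exp_eq (Ψ A) hBu
  set CB : Mat := aeval (Ψ A) p with hCB
  have hexpR : (exp : Mat → Mat) = exp := rfl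
  have hconjB : Φ (Ψ A) = Ψ A := by
    ext i j
    simp [hΦ, hΨ, RingHom.mapMatrix_apply, Matrix.map_apply, Complex.conj_ofReal]
  have hΦC : Φ CB = aeval (Ψ A) (p.map (starRingEnd ℂ)) := by
    show Φ (aeval (Ψ A) p) = _
    rw [aeval_def, Polynomial.hom_eval₂, hconjB, aeval_def, Polynomial.eval₂_map]
    congr 1
    refine RingHom.ext fun c => ?_
    ext i j
    rcases eq_or_ne i j with rfl | hij
    · simp [hΦ, RingHom.mapMatrix_apply, Matrix.map_apply, Matrix.algebraMap_eq_diagonal]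
    · simp [hΦ, RingHom.mapMatrix_apply, Matrix.map_apply, Matrix.algebraMap_eq_diagonal,
        Matrix.diagonal_apply_ne _ hij]
  have hcomm : Commute CB (Φ CB) := by
    rw [hΦC]
    exact aeval_commute _ p _
  have hexpC : exp CB = Ψ A := by rw [hexpR]; exact hp
  have hexpC' : exp (Φ CB) = Ψ A := by
    erw [← map_exp Φ hΦc, hexpC, hconjB]
  have hexpD : exp (CB + Φ CB) = Ψ A * Ψ A := by
    rw [Matrix.exp_add_of_commute _ _ hcomm, hexpC, hexpC']
  have hΦΦ : ∀ Y : Mat, Φ (Φ Y) = Y := by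
    intro Y
    ext i j
    simp [hΦ, RingHom.mapMatrix_apply, Matrix.map_apply]
  have hDconj : Φ (CB + Φ CB) = CB + Φ CB := by
    rw [map_add, hΦΦ, add_comm]
  refine ⟨(CB + Φ CB).map Complex.re, ?_⟩
  have hL : Ψ ((CB + Φ CB).map Complex.re) = CB + Φ CB := by
    rw [← Matrix.ext_iff] at hDconj
    ext i j
    have h1 : (starRingEnd ℂ) ((CB + Φ CB) i j) = (CB + Φ CB) i j := by
      have := hDconj i j
      simpa [hΦ, RingHom.mapMatrix_apply, Matrix.map_apply] using this
    have h2 := Complex.conj_eq_iff_re.mp h1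
    simpa [hΨ, RingHom.mapMatrix_apply, Matrix.map_apply] using h2
  have hinj : Function.Injective Ψ := by
    intro X Y hXY
    ext i j
    have h3 : (X.map Complex.ofRealHom) i j = (Y.map Complex.ofRealHom) i j := by
      rw [show X.map Complex.ofRealHom = Y.map Complex.ofRealHom from hXY]
    simp only [Matrix.map_apply] at h3
    exact Complex.ofReal_injective h3
  apply hinj
  erw [map_exp Ψ hΨc, hL, hexpD, map_mul]

end Inner

lemma exists_real_log {n : ℕ} (A : Matrix (Fin n) (Fin n) ℝ) (hA : IsUnit A) :
    ∃ L : Matrix (Fin n) (Fin n) ℝ, exp L = A * A := by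
  obtain ⟨L, hL⟩ := exists_real_log_inner A hA
  exact ⟨L, hL⟩

lemma isOneParam_exp {n : ℕ} (L : Matrix (Fin n) (Fin n) ℝ) :
    IsOneParamSubgroup (fun t : ℝ => exp (t • L)) := by
  letI := Matrix.linftyOpNormedAddCommGroup (m := Fin n) (n := Fin n) (α := ℝ)
  letI := Matrix.linftyOpNormedRing (n := Fin n) (α := ℝ)
  letI := Matrix.linftyOpNormedAlgebra (R := ℝ) (n := Fin n) (α := ℝ)
  letI : NormedAlgebra ℚ (Matrix (Fin n) (Fin n) ℝ) := NormedAlgebra.restrictScalars ℚ ℝ _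
  refine ⟨?_, ?_, ?_, ?_⟩
  · exact exp_continuous.comp (continuous_id.smul continuous_const)
  · show exp ((0 : ℝ) • L) = 1
    rw [zero_smul]
    exact NormedSpace.exp_zero
  · intro s t
    show exp ((s + t) • L) = exp (s • L) * exp (t • L)
    rw [add_smul]
    exact NormedSpace.exp_add_of_commute (((Commute.refl L).smul_left s).smul_right t)
  · intro t
    exact Matrix.isUnit_exp (t • L)

end OneParamSq
end

open OneParamSq

/-- `M ∈ GL(n,ℝ)` lies on a one-parameter subgroup of `GL(n,ℝ)` if and
only if `M` has a square root in `GL(n,ℝ)`; in particular `M²` always lies on a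
one-parameter subgroup. -/
theorem lies_on_one_param_iff_square_root {n : ℕ}
    (M : Matrix (Fin n) (Fin n) ℝ) (hM : IsUnit M) :
    ((∃ ρ : ℝ → Matrix (Fin n) (Fin n) ℝ, IsOneParamSubgroup ρ ∧ ρ 1 = M) ↔
      (∃ A : Matrix (Fin n) (Fin n) ℝ, IsUnit A ∧ A * A = M)) ∧
    (∃ ρ : ℝ → Matrix (Fin n) (Fin n) ℝ, IsOneParamSubgroup ρ ∧ ρ 1 = M * M) := by
  constructor
  · constructor
    · rintro ⟨ρ, ⟨hcont, h0, hadd, hunit⟩, h1⟩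
      refine ⟨ρ (1 / 2), hunit _, ?_⟩
      rw [← hadd]
      norm_num [h1]
    · rintro ⟨A, hAu, hAA⟩
      obtain ⟨L, hL⟩ := exists_real_log A hAu
      refine ⟨fun t => NormedSpace.exp (t • L), isOneParam_exp L, ?_⟩
      show NormedSpace.exp ((1 : ℝ) • L) = M
      rw [one_smul, hL, hAA]
  · obtain ⟨L, hL⟩ := exists_real_log M hM
    refine ⟨fun t => NormedSpace.exp (t • L), isOneParam_exp L, ?_⟩
    show NormedSpace.exp ((1 : ℝ) • L) = M * M
    rw [one_smul, hL]
end

section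
/- Let M̄ ∈ GL(n,ℝ) have a single eigenvalue λ > 0, with Jordan filtration V_i = ker((λ·Id − M̄)^{i+1}). If v ∈ V_i \ V_{i−1}, then there exists a constant C_v > 0 such that ‖M̄^t v‖ ≥ C_v·λ^t·t^i for all integers t ≥ 1. -/
open Finset

/-- If a lower bound `c * g t ≤ f t` holds eventually (for `t ≥ T`), and `f`, `g`
are positive for `t ≥ 1`, then a (possibly smaller) positive constant works for all
`t ≥ 1`. -/
lemma epl_aux_const (f g : ℕ → ℝ) (hf : ∀ t, 1 ≤ t → 0 < f t)
    (hg : ∀ t, 1 ≤ t → 0 < g t) :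
    ∀ T : ℕ, ∀ c : ℝ, 0 < c → (∀ t, T ≤ t → c * g t ≤ f t) →
    ∃ C, 0 < C ∧ ∀ t, 1 ≤ t → C * g t ≤ f t := by
  intro T
  induction T with
  | zero => exact fun c hc h => ⟨c, hc, fun t _ => h t (Nat.zero_le t)⟩
  | succ T ih =>
    intro c hc h
    rcases Nat.eq_zero_or_pos T with hT0 | hT1
    · subst hT0
      exact ⟨c, hc, fun t ht => h t ht⟩
    · have hgT := hg T hT1
      have hfT := hf T hT1
      refine ih (min c (f T / g T)) (lt_min hc (div_pos hfT hgT)) ?_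
      intro t ht
      rcases eq_or_lt_of_le ht with heq | hlt
      · rw [← heq]
        calc min c (f T / g T) * g T ≤ (f T / g T) * g T :=
              mul_le_mul_of_nonneg_right (min_le_right _ _) hgT.le
          _ = f T := div_mul_cancel₀ _ hgT.ne'
      · exact le_trans
          (mul_le_mul_of_nonneg_right (min_le_left _ _) (hg t (le_trans hT1 ht)).le)
          (h t hlt)

/-- Exponential·Polynomial Lower Bound.  If `M̄ ∈ GL(n,ℝ)` has single
eigenvalue `λ > 0` (over `ℂ`), with Jordan filtration `V_i = ker((λ·Id − M̄)^{i+1})`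
(and `V_{-1} = 0`), and `v ∈ V_i \ V_{i-1}`, then there is `C_v > 0` such that
`‖M̄^t v‖ ≥ C_v·λ^t·t^i` for all integers `t ≥ 1`. -/
theorem exponential_polynomial_lower_bound {n : ℕ}
    (Mbar : Matrix (Fin n) (Fin n) ℝ) (hunit : IsUnit Mbar)
    (lam : ℝ) (hlam : 0 < lam)
    (hspec : spectrum ℂ (Mbar.map Complex.ofReal) = {(lam : ℂ)})
    (i : ℕ) (v : Fin n → ℝ)
    (hvi : ((lam • (1 : Matrix (Fin n) (Fin n) ℝ) - Mbar) ^ (i + 1)).mulVec v = 0)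
    (hvnot : ((lam • (1 : Matrix (Fin n) (Fin n) ℝ) - Mbar) ^ i).mulVec v ≠ 0) :
    ∃ Cv : ℝ, 0 < Cv ∧ ∀ t : ℕ, 1 ≤ t →
      Cv * lam ^ t * (t : ℝ) ^ i ≤ ‖(Mbar ^ t).mulVec v‖ := by
  have hlam' : lam ≠ 0 := hlam.ne'
  set N : Matrix (Fin n) (Fin n) ℝ := lam • (1 : Matrix (Fin n) (Fin n) ℝ) - Mbar with hN
  set w : ℕ → (Fin n → ℝ) := fun k => (N ^ k).mulVec v with hw
  set co : ℕ → ℕ → ℝ := fun t k => (-1 : ℝ) ^ k * (t.choose k) * lam ^ t * (lam⁻¹) ^ k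
    with hco
  have hMbar : Mbar = lam • (1 : Matrix (Fin n) (Fin n) ℝ) - N := by
    rw [hN]; abel
  have hwsucc : ∀ k, N.mulVec (w k) = w (k + 1) := by
    intro k
    simp only [hw, Matrix.mulVec_mulVec]
    rw [← pow_succ']
  have hwtop : w (i + 1) = 0 := hvi
  -- coefficient recursions
  have hc0 : ∀ t : ℕ, co (t + 1) 0 = lam * co t 0 := by
    intro t
    simp only [hco, pow_zero, Nat.choose_zero_right, Nat.cast_one, pow_succ]
    ring
  have hcs : ∀ t k : ℕ, co (t + 1) (k + 1) = lam * co t (k + 1) - co t k := by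
    intro t k
    have hchoose : (((t + 1).choose (k + 1) : ℕ) : ℝ) =
        (t.choose (k + 1) : ℝ) + (t.choose k : ℝ) := by
      rw [Nat.choose_succ_succ]
      push_cast
      ring
    simp only [hco, hchoose]
    field_simp
    linear_combination (-((-1:ℝ)^k * (t.choose k : ℝ) * lam^t * lam⁻¹^k)) * mul_inv_cancel₀ hlam'
  -- key binomial identity
  have key : ∀ t : ℕ, (Mbar ^ t).mulVec v = ∑ k ∈ range (i + 1), co t k • w k := by
    intro t
    induction t with
    | zero =>
      rw [pow_zero, Matrix.one_mulVec, Finset.sum_eq_single 0]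
      · simp [hco, hw]
      · intro k _ hk
        have h0 : (0 : ℕ).choose k = 0 := Nat.choose_eq_zero_of_lt (Nat.pos_of_ne_zero hk)
        simp [hco, h0]
      · intro h
        exact absurd (mem_range.mpr (Nat.succ_pos i)) h
    | succ t ihyp =>
      have hstep : (Mbar ^ (t + 1)).mulVec v = Mbar.mulVec ((Mbar ^ t).mulVec v) := by
        rw [pow_succ', ← Matrix.mulVec_mulVec]
      have hNlin : N.mulVec (∑ k ∈ range (i + 1), co t k • w k)
          = ∑ k ∈ range (i + 1), co t k • w (k + 1) := by
        have hrepr : N.mulVec (∑ k ∈ range (i + 1), co t k • w k)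
            = N.mulVecLin (∑ k ∈ range (i + 1), co t k • w k) := rfl
        rw [hrepr, map_sum]
        refine Finset.sum_congr rfl fun k _ => ?_
        rw [map_smul]
        congr 1
        exact hwsucc k
      have e1 : ∑ k ∈ range (i + 1), co t k • w (k + 1)
          = ∑ k ∈ range i, co t k • w (k + 1) := by
        rw [Finset.sum_range_succ, hwtop, smul_zero, add_zero]
      have e2 : ∑ k ∈ range (i + 1), co (t + 1) k • w k
          = co (t + 1) 0 • w 0 + ∑ k ∈ range i, co (t + 1) (k + 1) • w (k + 1) := by
        rw [Finset.sum_range_succ']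
        exact add_comm _ _
      have e3 : lam • ∑ k ∈ range (i + 1), co t k • w k
          = (lam * co t 0) • w 0 + ∑ k ∈ range i, (lam * co t (k + 1)) • w (k + 1) := by
        rw [Finset.smul_sum]
        simp only [smul_smul]
        rw [Finset.sum_range_succ']
        exact add_comm _ _
      rw [hstep, ihyp, hMbar, Matrix.sub_mulVec, Matrix.smul_mulVec,
        Matrix.one_mulVec, hNlin, e1, e3, e2]
      rw [add_sub_assoc, ← Finset.sum_sub_distrib]
      congr 1
      · rw [hc0]
      · refine Finset.sum_congr rfl fun k _ => ?_
        rw [← sub_smul, ← hcs]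
  -- positivity facts
  have hv0 : v ≠ 0 := by
    intro h
    apply hvnot
    rw [h, Matrix.mulVec_zero]
  have hfpos : ∀ t : ℕ, 1 ≤ t → 0 < ‖(Mbar ^ t).mulVec v‖ := by
    intro t _
    rw [norm_pos_iff]
    intro h
    have hinj := Matrix.mulVec_injective_iff_isUnit.mpr (hunit.pow t)
    exact hv0 (hinj (by rw [h, Matrix.mulVec_zero]))
  rcases Nat.eq_zero_or_pos i with hi0 | hi1
  · -- case i = 0
    subst hi0
    refine ⟨‖v‖, norm_pos_iff.mpr hv0, ?_⟩
    intro t _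
    have hk : (Mbar ^ t).mulVec v = lam ^ t • v := by
      rw [key t]
      simp [hco, hw]
    rw [hk, norm_smul, pow_zero, mul_one, Real.norm_eq_abs,
      abs_of_pos (pow_pos hlam t), mul_comm]
  · -- case i ≥ 1
    have hwi : 0 < ‖w i‖ := norm_pos_iff.mpr hvnot
    set A : ℝ := ‖w i‖ with hA
    set D : ℝ := ∑ k ∈ range i, (lam⁻¹) ^ k * ‖w k‖ with hD
    have hDnn : 0 ≤ D := by
      apply Finset.sum_nonneg
      intro k _
      positivity
    set E : ℝ := (lam⁻¹) ^ i * A / (2 ^ i * (i.factorial : ℝ)) with hE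
    have hEpos : 0 < E := by
      apply div_pos
      · positivity
      · positivity
    set T : ℕ := max (2 * i) (⌈2 * D / E⌉₊ + 1) with hT
    have hbound : ∀ t : ℕ, T ≤ t → (E / 2) * (lam ^ t * (t : ℝ) ^ i)
        ≤ ‖(Mbar ^ t).mulVec v‖ := by
      intro t ht
      have h2i : 2 * i ≤ t := le_trans (le_max_left _ _) ht
      have hceil : ⌈2 * D / E⌉₊ + 1 ≤ t := le_trans (le_max_right _ _) ht
      have ht1 : 1 ≤ t := le_trans (Nat.succ_le_succ (Nat.zero_le _)) hceil
      have htR : (1 : ℝ) ≤ (t : ℝ) := by exact_mod_cast ht1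
      have hit : i ≤ t := le_trans (Nat.le_mul_of_pos_left i (by norm_num)) h2i
      have hiR : (i : ℝ) ≤ (t : ℝ) / 2 := by
        have : (2 * i : ℕ) ≤ t := h2i
        have h := (Nat.cast_le (α := ℝ)).mpr this
        push_cast at h
        linarith
      -- split the sum
      have hsplit : (Mbar ^ t).mulVec v
          = (∑ k ∈ range i, co t k • w k) + co t i • w i := by
        rw [key t, Finset.sum_range_succ]
      -- head term lower bound
      have habsco : ∀ k, |co t k| = (t.choose k : ℝ) * lam ^ t * (lam⁻¹) ^ k := by
        intro k
        simp only [hco, abs_mul, abs_pow, abs_neg, abs_one, one_pow, one_mul,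
          Nat.abs_cast, abs_of_pos hlam, abs_of_pos (inv_pos.mpr hlam)]
      have hhead : E * ((t : ℝ) ^ i * lam ^ t) ≤ ‖co t i • w i‖ := by
        rw [norm_smul, Real.norm_eq_abs, habsco i]
        have hchoose : ((t : ℝ) / 2) ^ i / (i.factorial : ℝ) ≤ (t.choose i : ℝ) := by
          refine le_trans ?_ (Nat.pow_le_choose i t)
          apply div_le_div_of_nonneg_right ?_ (by positivity)
          · apply pow_le_pow_left₀ (by positivity)
            have hcast : ((t + 1 - i : ℕ) : ℝ) = (t : ℝ) + 1 - (i : ℝ) := by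
              rw [Nat.cast_sub (le_trans hit (Nat.le_succ t))]
              push_cast
              ring
            rw [hcast]
            linarith
        calc E * ((t : ℝ) ^ i * lam ^ t)
            = (((t : ℝ) / 2) ^ i / (i.factorial : ℝ)) * lam ^ t * ((lam⁻¹) ^ i * A) := by
              rw [hE, div_pow]
              field_simp
          _ ≤ (t.choose i : ℝ) * lam ^ t * ((lam⁻¹) ^ i * A) := by
              apply mul_le_mul_of_nonneg_right
                (mul_le_mul_of_nonneg_right hchoose (by positivity)) (by positivity)
          _ = (t.choose i : ℝ) * lam ^ t * (lam⁻¹) ^ i * A := by ring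
      -- tail upper bound
      have htail : ‖∑ k ∈ range i, co t k • w k‖ ≤ lam ^ t * (t : ℝ) ^ (i - 1) * D := by
        refine le_trans (norm_sum_le _ _) ?_
        rw [hD, Finset.mul_sum]
        apply Finset.sum_le_sum
        intro k hk
        rw [norm_smul, Real.norm_eq_abs, habsco k]
        have hk1 : k ≤ i - 1 := Nat.le_sub_one_of_lt (mem_range.mp hk)
        have hck : (t.choose k : ℝ) ≤ (t : ℝ) ^ (i - 1) := by
          calc (t.choose k : ℝ) ≤ (t : ℝ) ^ k := by exact_mod_cast Nat.choose_le_pow t k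
            _ ≤ (t : ℝ) ^ (i - 1) := pow_le_pow_right₀ htR hk1
        calc (t.choose k : ℝ) * lam ^ t * (lam⁻¹) ^ k * ‖w k‖
            ≤ (t : ℝ) ^ (i - 1) * lam ^ t * (lam⁻¹) ^ k * ‖w k‖ := by
              apply mul_le_mul_of_nonneg_right ?_ (norm_nonneg _)
              apply mul_le_mul_of_nonneg_right ?_ (by positivity)
              exact mul_le_mul_of_nonneg_right hck (by positivity)
          _ = lam ^ t * (t : ℝ) ^ (i - 1) * ((lam⁻¹) ^ k * ‖w k‖) := by ring
      -- combine
      have hnorm : ‖co t i • w i‖ - ‖∑ k ∈ range i, co t k • w k‖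
          ≤ ‖(Mbar ^ t).mulVec v‖ := by
        have h3 : (Mbar ^ t).mulVec v - (∑ k ∈ range i, co t k • w k) = co t i • w i := by
          rw [hsplit]; abel
        have h4 : ‖co t i • w i‖
            ≤ ‖(Mbar ^ t).mulVec v‖ + ‖∑ k ∈ range i, co t k • w k‖ := by
          rw [← h3]
          exact norm_sub_le _ _
        linarith
      have hDE : 2 * D / E ≤ (t : ℝ) := by
        have h1 : (2 * D / E : ℝ) ≤ (⌈2 * D / E⌉₊ : ℝ) := Nat.le_ceil _
        have h2 : ((⌈2 * D / E⌉₊ : ℕ) : ℝ) ≤ (t : ℝ) := by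
          exact_mod_cast le_trans (Nat.le_succ _) hceil
        linarith
      have hDEt : D ≤ E * (t : ℝ) / 2 := by
        rw [div_le_iff₀ hEpos] at hDE
        linarith
      obtain ⟨j, rfl⟩ : ∃ j, i = j + 1 := ⟨i - 1, (Nat.succ_pred_eq_of_pos hi1).symm⟩
      have hij : (j + 1) - 1 = j := rfl
      rw [hij] at htail
      have h5 : lam ^ t * (t : ℝ) ^ j * D ≤ (E / 2) * ((t : ℝ) ^ (j + 1) * lam ^ t) := by
        calc lam ^ t * (t : ℝ) ^ j * D
            ≤ lam ^ t * (t : ℝ) ^ j * (E * (t : ℝ) / 2) :=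
              mul_le_mul_of_nonneg_left hDEt (by positivity)
          _ = (E / 2) * ((t : ℝ) ^ (j + 1) * lam ^ t) := by rw [pow_succ]; ring
      calc (E / 2) * (lam ^ t * (t : ℝ) ^ (j + 1))
          = E * ((t : ℝ) ^ (j + 1) * lam ^ t)
            - (E / 2) * ((t : ℝ) ^ (j + 1) * lam ^ t) := by ring
        _ ≤ E * ((t : ℝ) ^ (j + 1) * lam ^ t) - lam ^ t * (t : ℝ) ^ j * D := by linarith
        _ ≤ ‖co t (j + 1) • w (j + 1)‖ - ‖∑ k ∈ range (j + 1), co t k • w k‖ :=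
            sub_le_sub hhead htail
        _ ≤ ‖(Mbar ^ t).mulVec v‖ := hnorm
    -- use the auxiliary lemma
    obtain ⟨C, hC, hCall⟩ := epl_aux_const (fun t => ‖(Mbar ^ t).mulVec v‖)
      (fun t => lam ^ t * (t : ℝ) ^ i) hfpos
      (fun t ht => by
        have : (1 : ℝ) ≤ (t : ℝ) := by exact_mod_cast ht
        positivity) T (E / 2) (by positivity) hbound
    refine ⟨C, hC, fun t ht => ?_⟩
    rw [mul_assoc]
    exact hCall t ht
end

section
/- Let M^t, N^t be one-parameter subgroups of GL(n,ℝ) with no eigenvalues of M = M^1 or N = N^1 on the unit circle, and let f: ℝⁿ → ℝⁿ be a bijection satisfying the uniform quasi-isometry condition (1/K)·d_{M,t}(p,q) − C ≤ d_{N,t}(f(p),f(q)) ≤ K·d_{M,t}(p,q) + C for all t, p, q. Then f is a homeomorphism of ℝⁿ. -/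
open Filter Topology Module Function

namespace RigidityAux


lemma decay_aux (j : ℕ) {r : ℝ} (h0 : 0 ≤ r) (h1 : r < 1) :
    Tendsto (fun k : ℕ => (k : ℝ) ^ j * r ^ (k - j)) atTop (𝓝 0) := by
  rcases eq_or_lt_of_le h0 with h | h
  · apply tendsto_const_nhds.congr'
    filter_upwards [eventually_ge_atTop (j + 1)] with k hk
    rw [← h, zero_pow (by omega), mul_zero]
  · have h2 : Tendsto (fun k : ℕ => ((k : ℝ) ^ j * r ^ k) * (r ^ j)⁻¹) atTop (𝓝 0) := by
      have := (tendsto_pow_const_mul_const_pow_of_abs_lt_one j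
        (by rwa [abs_of_nonneg h0] : |r| < 1)).mul_const (r ^ j)⁻¹
      simpa using this
    apply h2.congr'
    filter_upwards [eventually_ge_atTop j] with k hk
    have hrj : r ^ j ≠ 0 := pow_ne_zero _ (ne_of_gt h)
    rw [pow_sub₀ r (ne_of_gt h) hk]
    field_simp

lemma tendsto_pow_apply {V : Type*} [NormedAddCommGroup V] [NormedSpace ℂ V]
    (T : Module.End ℂ V) (μ : ℂ) (hμ : ‖μ‖ < 1) (d : ℕ) (x : V)
    (hx : ((T - μ • 1) ^ d) x = 0) :
    Tendsto (fun k : ℕ => (T ^ k) x) atTop (𝓝 0) := by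
  set Nop : Module.End ℂ V := T - μ • 1 with hNop
  have hcomm : Commute Nop (μ • (1 : Module.End ℂ V)) :=
    Commute.smul_right (Commute.one_right Nop) μ
  have hT : T = Nop + μ • 1 := by simp [hNop]
  have hpow : ∀ k : ℕ, T ^ k = ∑ j ∈ Finset.range (k + 1),
      ((μ ^ (k - j) * (k.choose j : ℂ)) • Nop ^ j) := by
    intro k
    rw [hT, hcomm.add_pow]
    refine Finset.sum_congr rfl fun j hj => ?_
    rw [smul_pow, one_pow, mul_smul_comm, smul_mul_assoc, mul_one]
    rw [show ((k.choose j : Module.End ℂ V)) = algebraMap ℂ _ (k.choose j : ℂ) by simp]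
    rw [← Algebra.commutes, ← Algebra.smul_def, smul_smul]
  -- each term with j ≥ d vanishes on x
  have hvanish : ∀ j, d ≤ j → (Nop ^ j) x = 0 := by
    intro j hj
    have : Nop ^ j = Nop ^ (j - d) * Nop ^ d := by rw [← pow_add]; congr 1; omega
    rw [this, Module.End.mul_apply, hx, map_zero]
  have hbound : ∀ᶠ k : ℕ in atTop, ‖(T ^ k) x‖ ≤
      ∑ j ∈ Finset.range d, (k.choose j : ℝ) * ‖μ‖ ^ (k - j) * ‖(Nop ^ j) x‖ := by
    filter_upwards [eventually_ge_atTop d] with k hk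
    have hdk : Finset.range d ⊆ Finset.range (k + 1) := by
      apply Finset.range_subset_range.2; omega
    have heval : (T ^ k) x = ∑ j ∈ Finset.range d,
        (μ ^ (k - j) * (k.choose j : ℂ)) • (Nop ^ j) x := by
      rw [hpow k, LinearMap.sum_apply]
      rw [← Finset.sum_subset hdk]
      · simp
      · intro j hj hjd
        simp only [Finset.mem_range, not_lt] at hjd
        simp [hvanish j (by omega)]
    rw [heval]
    refine (norm_sum_le _ _).trans (Finset.sum_le_sum fun j hj => ?_)
    rw [norm_smul, norm_mul, norm_pow]
    simp only [Complex.norm_natCast]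
    ring_nf
    exact le_refl _
  have hlim : Tendsto (fun k : ℕ => ∑ j ∈ Finset.range d,
      (k.choose j : ℝ) * ‖μ‖ ^ (k - j) * ‖(Nop ^ j) x‖) atTop (𝓝 0) := by
    have : Tendsto (fun k : ℕ => ∑ j ∈ Finset.range d,
        ((k : ℝ) ^ j * ‖μ‖ ^ (k - j)) * ‖(Nop ^ j) x‖) atTop (𝓝 0) := by
      have := tendsto_finset_sum (Finset.range d)
        (fun j _ => (decay_aux j (norm_nonneg μ) hμ).mul_const ‖(Nop ^ j) x‖)
      simpa using this
    apply squeeze_zero' ?_ ?_ this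
    · filter_upwards with k
      exact Finset.sum_nonneg fun j _ => by positivity
    · filter_upwards with k
      refine Finset.sum_le_sum fun j hj => ?_
      have h1 : (k.choose j : ℝ) ≤ (k : ℝ) ^ j := by
        exact_mod_cast Nat.choose_le_pow k j
      have := mul_le_mul_of_nonneg_right h1 (by positivity : (0:ℝ) ≤ ‖μ‖ ^ (k - j))
      exact mul_le_mul_of_nonneg_right this (norm_nonneg _)
  rw [tendsto_zero_iff_norm_tendsto_zero]
  exact squeeze_zero' (by filter_upwards with k; positivity) hbound hlim



lemma unif {n : ℕ} (S : ℕ → Module.End ℂ (Fin n → ℂ))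
    (hS : ∀ x, Tendsto (fun k => (S k) x) atTop (𝓝 0)) {ε : ℝ} (hε : 0 < ε) :
    ∃ m0 : ℕ, ∀ m ≥ m0, ∀ x, ‖(S m) x‖ ≤ ε * ‖x‖ := by
  have hg : Tendsto (fun k => ∑ i : Fin n, ‖(S k) (Pi.single i 1)‖) atTop (𝓝 0) := by
    have := tendsto_finset_sum Finset.univ
      (fun i (_ : i ∈ Finset.univ) => (hS (Pi.single i 1)).norm)
    simpa using this
  obtain ⟨m0, hm0⟩ := (hg.eventually_le_const hε).exists_forall_of_atTop
  refine ⟨m0, fun m hm x => ?_⟩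
  have hx : x = ∑ i : Fin n, x i • (Pi.single i 1 : Fin n → ℂ) := by
    funext j
    simp [Finset.sum_apply, Pi.single_apply, eq_comm]
  calc ‖(S m) x‖ = ‖∑ i : Fin n, x i • (S m) (Pi.single i 1)‖ := by
        conv_lhs => rw [hx]
        rw [map_sum]
        simp only [map_smul]
      _ ≤ ∑ i : Fin n, ‖x i • (S m) (Pi.single i 1)‖ := norm_sum_le _ _
      _ ≤ ∑ i : Fin n, ‖x‖ * ‖(S m) (Pi.single i 1)‖ := by
        refine Finset.sum_le_sum fun i _ => ?_
        rw [norm_smul]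
        exact mul_le_mul_of_nonneg_right (norm_le_pi_norm x i) (norm_nonneg _)
      _ = (∑ i : Fin n, ‖(S m) (Pi.single i 1)‖) * ‖x‖ := by
        rw [Finset.sum_mul]
        exact Finset.sum_congr rfl fun i _ => mul_comm _ _
      _ ≤ ε * ‖x‖ := mul_le_mul_of_nonneg_right (hm0 m hm) (norm_nonneg _)

/-- disjointness of Finset sups of an independent family (modular lattice). -/
lemma supIndep_disjoint_sup {α : Type*} {ι : Type*} [DecidableEq ι] [Lattice α] [OrderBot α]
    [IsModularLattice α] {f : ι → α} {s t : Finset ι}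
    (h : (s ∪ t).SupIndep f) (hst : Disjoint s t) :
    Disjoint (s.sup f) (t.sup f) := by
  classical
  induction s using Finset.induction_on with
  | empty => simp
  | @insert i s his ih =>
    have hDst : Disjoint s t := (Finset.disjoint_insert_left.mp hst).2
    have hit : i ∉ t := (Finset.disjoint_insert_left.mp hst).1
    have h' : (s ∪ t).SupIndep f := h.subset (by
      intro x hx; simp only [Finset.mem_union] at hx ⊢
      rcases hx with hx | hx
      · exact Or.inl (Finset.mem_insert_of_mem hx)
      · exact Or.inr hx)
    have hD : Disjoint (s.sup f) (t.sup f) := ih h' hDst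
    have hfi : Disjoint (f i) (s.sup f ⊔ t.sup f) := by
      rw [← Finset.sup_union]
      exact h (Finset.union_subset
          (Finset.subset_union_left.trans (Finset.union_subset_union_left (Finset.subset_insert i s)))
          (Finset.subset_union_right))
        (Finset.mem_union_left _ (Finset.mem_insert_self i s))
        (by simp [his, hit])
    rw [Finset.sup_insert]
    exact hD.disjoint_sup_left_of_disjoint_sup_right hfi



lemma core {n : ℕ} (L L' : Module.End ℂ (Fin n → ℂ)) (h1 : L * L' = 1) (h2 : L' * L = 1)
    (hspec : ∀ μ ∈ spectrum ℂ L, ‖μ‖ ≠ 1) {ε R : ℝ} (hε : 0 < ε) (hR : 0 ≤ R) :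
    ∃ m : ℕ, ∀ y : Fin n → ℂ, ‖(L ^ m) y‖ ≤ R → ‖(L' ^ m) y‖ ≤ R → ‖y‖ ≤ ε := by
  classical
  have hcomm : Commute L L' := h1.trans h2.symm
  have hfin : (spectrum ℂ L).Finite := Module.End.finite_spectrum L
  set Spec : Finset ℂ := hfin.toFinset with hSpecdef
  set s1 : Finset ℂ := Spec.filter (fun μ => ‖μ‖ < 1) with hs1def
  set s2 : Finset ℂ := Spec.filter (fun μ => 1 < ‖μ‖) with hs2def
  set Es : Submodule ℂ (Fin n → ℂ) := s1.sup L.maxGenEigenspace with hEsdef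
  set Eu : Submodule ℂ (Fin n → ℂ) := s2.sup L.maxGenEigenspace with hEudef
  -- sup = ⊤
  have hle : ∀ μ : ℂ, L.maxGenEigenspace μ ≤ Es ⊔ Eu := by
    intro μ
    by_cases hbot : L.maxGenEigenspace μ = ⊥
    · simp [hbot]
    · have hne : L.genEigenspace μ (Module.finrank ℂ (Fin n → ℂ)) ≠ ⊥ := by
        rw [← Module.End.maxGenEigenspace_eq_genEigenspace_finrank]; exact hbot
      have hgen : L.HasGenEigenvalue μ (Module.finrank ℂ (Fin n → ℂ)) :=
        Module.End.hasGenEigenvalue_iff.mpr hne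
      have hpos : 0 < Module.finrank ℂ (Fin n → ℂ) :=
        Nat.pos_of_ne_zero (Module.End.exp_ne_zero_of_hasGenEigenvalue hgen)
      have heig : L.HasEigenvalue μ :=
        (Module.End.hasGenEigenvalue_iff_hasEigenvalue hpos).mp hgen
      have hmem : μ ∈ spectrum ℂ L := Module.End.hasEigenvalue_iff_mem_spectrum.mp heig
      have hmem' : μ ∈ Spec := hfin.mem_toFinset.mpr hmem
      rcases lt_or_gt_of_ne (hspec μ hmem) with hlt | hgt
      · exact le_trans (Finset.le_sup (Finset.mem_filter.mpr ⟨hmem', hlt⟩)) le_sup_left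
      · exact le_trans (Finset.le_sup (Finset.mem_filter.mpr ⟨hmem', hgt⟩)) le_sup_right
  have htop : Es ⊔ Eu = ⊤ := by
    rw [eq_top_iff, ← Module.End.iSup_maxGenEigenspace_eq_top L]
    exact iSup_le hle
  have hdisj : Disjoint Es Eu := by
    apply supIndep_disjoint_sup ((Module.End.independent_maxGenEigenspace L).supIndep' (s1 ∪ s2))
    rw [Finset.disjoint_left]
    intro μ hμ1 hμ2
    have h1' := (Finset.mem_filter.mp hμ1).2
    have h2' := (Finset.mem_filter.mp hμ2).2
    exact absurd (h1'.trans h2') (lt_irrefl _)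
  have hcompl : IsCompl Es Eu := ⟨hdisj, codisjoint_iff.mpr htop⟩
  -- projections
  set P : Module.End ℂ (Fin n → ℂ) := Es.subtype ∘ₗ Es.projectionOnto Eu hcompl with hPdef
  set Q : Module.End ℂ (Fin n → ℂ) :=
    Eu.subtype ∘ₗ Eu.projectionOnto Es hcompl.symm with hQdef
  have hPadd : ∀ x, P x + Q x = x := fun x =>
    Submodule.projection_add_projection_eq_self hcompl x
  have hPs : ∀ x, P x ∈ Es := fun x => Submodule.coe_mem _
  have hQu : ∀ x, Q x ∈ Eu := fun x => Submodule.coe_mem _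
  have hPleft : ∀ v ∈ Es, P v = v := by
    intro v hv
    show ((Es.projectionOnto Eu hcompl v : _) : Fin n → ℂ) = v
    rw [show v = ((⟨v, hv⟩ : Es) : Fin n → ℂ) from rfl,
      Submodule.projectionOnto_apply_left hcompl]
  have hPright : ∀ v ∈ Eu, P v = 0 := by
    intro v hv
    show ((Es.projectionOnto Eu hcompl v : _) : Fin n → ℂ) = 0
    rw [Submodule.projectionOnto_apply_of_mem_right hcompl hv, Submodule.coe_zero]
  have hQright : ∀ v ∈ Es, Q v = 0 := by
    intro v hv
    show ((Eu.projectionOnto Es hcompl.symm v : _) : Fin n → ℂ) = 0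
    rw [Submodule.projectionOnto_apply_of_mem_right hcompl.symm hv, Submodule.coe_zero]
  have hQleft : ∀ v ∈ Eu, Q v = v := by
    intro v hv
    show ((Eu.projectionOnto Es hcompl.symm v : _) : Fin n → ℂ) = v
    rw [show v = ((⟨v, hv⟩ : Eu) : Fin n → ℂ) from rfl,
      Submodule.projectionOnto_apply_left hcompl.symm]
  -- invariance
  have hmapsto : ∀ (g : Module.End ℂ (Fin n → ℂ)), Commute L g → ∀ (s : Finset ℂ),
      ∀ v ∈ s.sup L.maxGenEigenspace, g v ∈ s.sup L.maxGenEigenspace := by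
    intro g hg s
    have : s.sup L.maxGenEigenspace ≤
        Submodule.comap g (s.sup L.maxGenEigenspace) := by
      refine Finset.sup_le fun μ hμ => ?_
      refine le_trans ?_ (Submodule.comap_mono (Finset.le_sup hμ))
      intro v hv
      exact Module.End.mapsTo_maxGenEigenspace_of_comm hg μ hv
    exact fun v hv => this hv
  have hLs : ∀ v ∈ Es, L v ∈ Es := hmapsto L (Commute.refl L) s1
  have hLu : ∀ v ∈ Eu, L v ∈ Eu := hmapsto L (Commute.refl L) s2
  have hL's : ∀ v ∈ Es, L' v ∈ Es := hmapsto L' hcomm s1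
  have hL'u : ∀ v ∈ Eu, L' v ∈ Eu := hmapsto L' hcomm s2
  -- commutation of projections with L, L'
  have hPcomm : ∀ (g : Module.End ℂ (Fin n → ℂ)), (∀ v ∈ Es, g v ∈ Es) →
      (∀ v ∈ Eu, g v ∈ Eu) → ∀ x, P (g x) = g (P x) := by
    intro g hgs hgu x
    have hgx : g x = g (P x) + g (Q x) := by rw [← map_add, hPadd]
    rw [hgx, map_add, hPleft _ (hgs _ (hPs x)), hPright _ (hgu _ (hQu x)), add_zero]
  have hQcomm : ∀ (g : Module.End ℂ (Fin n → ℂ)), (∀ v ∈ Es, g v ∈ Es) →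
      (∀ v ∈ Eu, g v ∈ Eu) → ∀ x, Q (g x) = g (Q x) := by
    intro g hgs hgu x
    have hgx : g x = g (P x) + g (Q x) := by rw [← map_add, hPadd]
    rw [hgx, map_add, hQright _ (hgs _ (hPs x)), hQleft _ (hgu _ (hQu x)), zero_add]
  -- decay on Es and Eu
  have hdecayS : ∀ v ∈ Es, Tendsto (fun k : ℕ => (L ^ k) v) atTop (𝓝 0) := by
    set Z : Submodule ℂ (Fin n → ℂ) :=
      { carrier := {v | Tendsto (fun k : ℕ => (L ^ k) v) atTop (𝓝 0)}
        add_mem' := fun {a b} ha hb => by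
          simpa only [Set.mem_setOf_eq, map_add, add_zero] using Tendsto.add ha hb
        zero_mem' := by
          simp only [Set.mem_setOf_eq, map_zero]
          exact tendsto_const_nhds
        smul_mem' := fun c v hv => by
          simpa only [Set.mem_setOf_eq, map_smul, smul_zero] using hv.const_smul c } with hZdef
    have : Es ≤ Z := by
      refine Finset.sup_le fun μ hμ => ?_
      intro v hv
      obtain ⟨k, hk⟩ := (Module.End.mem_maxGenEigenspace L μ v).mp hv
      exact tendsto_pow_apply L μ (Finset.mem_filter.mp hμ).2 k v hk
    exact fun v hv => this hv
  have hdecayU : ∀ v ∈ Eu, Tendsto (fun k : ℕ => (L' ^ k) v) atTop (𝓝 0) := by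
    set Z : Submodule ℂ (Fin n → ℂ) :=
      { carrier := {v | Tendsto (fun k : ℕ => (L' ^ k) v) atTop (𝓝 0)}
        add_mem' := fun {a b} ha hb => by
          simpa only [Set.mem_setOf_eq, map_add, add_zero] using Tendsto.add ha hb
        zero_mem' := by
          simp only [Set.mem_setOf_eq, map_zero]
          exact tendsto_const_nhds
        smul_mem' := fun c v hv => by
          simpa only [Set.mem_setOf_eq, map_smul, smul_zero] using hv.const_smul c } with hZdef
    have : Eu ≤ Z := by
      refine Finset.sup_le fun μ hμ => ?_
      intro v hv
      obtain ⟨k, hk⟩ := (Module.End.mem_maxGenEigenspace L μ v).mp hv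
      have hgt : 1 < ‖μ‖ := (Finset.mem_filter.mp hμ).2
      have hμ0 : μ ≠ 0 := by
        intro h; rw [h, norm_zero] at hgt; linarith
      have hfac : L' - μ⁻¹ • 1 = (-μ⁻¹) • (L' * (L - μ • 1)) := by
        rw [mul_sub, h2, mul_smul_comm, mul_one, smul_sub, smul_smul,
          neg_mul, inv_mul_cancel₀ hμ0]
        module
      have hcomm' : Commute L' (L - μ • 1) :=
        Commute.sub_right hcomm.symm (Commute.smul_right (Commute.one_right L') μ)
      have hkey : ((L' - μ⁻¹ • 1) ^ k) v = 0 := by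
        rw [hfac, smul_pow, hcomm'.mul_pow, LinearMap.smul_apply, Module.End.mul_apply,
          hk, map_zero, smul_zero]
      have hnorm : ‖μ⁻¹‖ < 1 := by
        rw [norm_inv]
        exact inv_lt_one_of_one_lt₀ hgt
      exact tendsto_pow_apply L' μ⁻¹ hnorm k v hkey
    exact fun v hv => this hv
  -- uniform estimates
  have hRpos : (0:ℝ) < R + 1 := by linarith
  have hε' : 0 < ε / (2 * (R + 1)) := by positivity
  obtain ⟨m1, hm1⟩ := unif (fun k => (L ^ k) ∘ₗ P)
    (fun x => hdecayS (P x) (hPs x)) hε'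
  obtain ⟨m2, hm2⟩ := unif (fun k => (L' ^ k) ∘ₗ Q)
    (fun x => hdecayU (Q x) (hQu x)) hε'
  set m := max m1 m2 with hmdef
  refine ⟨m, fun y hy1 hy2 => ?_⟩
  have hpow1 : L ^ m * L' ^ m = 1 := by rw [← hcomm.mul_pow, h1, one_pow]
  have hpow2 : L' ^ m * L ^ m = 1 := by rw [← hcomm.symm.mul_pow, h2, one_pow]
  -- commutation with powers
  have hPLk : ∀ (k : ℕ) x, P ((L ^ k) x) = (L ^ k) (P x) := by
    intro k
    induction k with
    | zero => simp
    | succ k ih =>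
      intro x
      have e1 : (L ^ (k+1)) x = (L ^ k) (L x) := by rw [pow_succ, Module.End.mul_apply]
      rw [e1, ih (L x), hPcomm L hLs hLu x, ← Module.End.mul_apply, ← pow_succ]
  have hQL'k : ∀ (k : ℕ) x, Q ((L' ^ k) x) = (L' ^ k) (Q x) := by
    intro k
    induction k with
    | zero => simp
    | succ k ih =>
      intro x
      have e1 : (L' ^ (k+1)) x = (L' ^ k) (L' x) := by rw [pow_succ, Module.End.mul_apply]
      rw [e1, ih (L' x), hQcomm L' hL's hL'u x, ← Module.End.mul_apply, ← pow_succ]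
  have hPy : P y = ((L ^ m) ∘ₗ P) ((L' ^ m) y) := by
    have : y = (L ^ m) ((L' ^ m) y) := by
      rw [← Module.End.mul_apply, hpow1, Module.End.one_apply]
    conv_lhs => rw [this]
    rw [hPLk m ((L' ^ m) y)]
    rfl
  have hQy : Q y = ((L' ^ m) ∘ₗ Q) ((L ^ m) y) := by
    have : y = (L' ^ m) ((L ^ m) y) := by
      rw [← Module.End.mul_apply, hpow2, Module.End.one_apply]
    conv_lhs => rw [this]
    rw [hQL'k m ((L ^ m) y)]
    rfl
  have hPyle : ‖P y‖ ≤ ε / (2 * (R + 1)) * R := by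
    rw [hPy]
    calc ‖((L ^ m) ∘ₗ P) ((L' ^ m) y)‖ ≤ ε / (2 * (R + 1)) * ‖(L' ^ m) y‖ :=
          hm1 m (le_max_left _ _) _
      _ ≤ ε / (2 * (R + 1)) * R := by
          exact mul_le_mul_of_nonneg_left hy2 (le_of_lt hε')
  have hQyle : ‖Q y‖ ≤ ε / (2 * (R + 1)) * R := by
    rw [hQy]
    calc ‖((L' ^ m) ∘ₗ Q) ((L ^ m) y)‖ ≤ ε / (2 * (R + 1)) * ‖(L ^ m) y‖ :=
          hm2 m (le_max_right _ _) _
      _ ≤ ε / (2 * (R + 1)) * R := by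
          exact mul_le_mul_of_nonneg_left hy1 (le_of_lt hε')
  calc ‖y‖ = ‖P y + Q y‖ := by rw [hPadd]
    _ ≤ ‖P y‖ + ‖Q y‖ := norm_add_le _ _
    _ ≤ ε / (2 * (R + 1)) * R + ε / (2 * (R + 1)) * R := add_le_add hPyle hQyle
    _ ≤ ε := by
        have key : ε / (2 * (R + 1)) * (2 * (R + 1)) = ε :=
          div_mul_cancel₀ ε (by positivity)
        nlinarith [key, hε'.le, hR, mul_nonneg hε'.le hR]



lemma norm_complexify {n : ℕ} (y : Fin n → ℝ) :
    ‖(fun i => (y i : ℂ))‖ = ‖y‖ := by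
  rw [Pi.norm_def, Pi.norm_def]
  congr 1
  apply Finset.sup_congr rfl
  intro i _
  simp [Complex.nnnorm_real]

lemma mulVec_complexify {n : ℕ} (G : Matrix (Fin n) (Fin n) ℝ) (y : Fin n → ℝ) :
    (G.map Complex.ofReal).mulVec (fun i => (y i : ℂ)) = fun i => ((G.mulVec y i : ℝ) : ℂ) := by
  funext i
  simp [Matrix.mulVec, dotProduct, Matrix.map_apply]

lemma keyA {n : ℕ} (A : Matrix (Fin n) (Fin n) ℝ) (hA : IsUnit A)
    (hspec : ∀ μ ∈ spectrum ℂ (A.map Complex.ofReal), ‖μ‖ ≠ 1)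
    {ε R : ℝ} (hε : 0 < ε) (hR : 0 ≤ R) :
    ∃ m : ℕ, ∀ B : Matrix (Fin n) (Fin n) ℝ, B * A ^ m = 1 → A ^ m * B = 1 →
      ∀ y : Fin n → ℝ, ‖(A ^ m).mulVec y‖ ≤ R → ‖B.mulVec y‖ ≤ R → ‖y‖ ≤ ε := by
  classical
  set φ : Matrix (Fin n) (Fin n) ℝ →+* Matrix (Fin n) (Fin n) ℂ :=
    Complex.ofRealHom.mapMatrix with hφ
  have hφap : ∀ G : Matrix (Fin n) (Fin n) ℝ, φ G = G.map Complex.ofReal := fun G => rfl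
  set Ac : Matrix (Fin n) (Fin n) ℂ := φ A with hAc
  have hdet : IsUnit Ac.det := by
    have h1 : IsUnit A.det := (Matrix.isUnit_iff_isUnit_det A).mp hA
    have h2 : Ac.det = (A.det : ℂ) := (Complex.ofRealHom.map_det A).symm
    rw [h2]
    exact isUnit_iff_ne_zero.mpr (Complex.ofReal_ne_zero.mpr h1.ne_zero)
  have hAc1 : Ac * Ac⁻¹ = 1 := Matrix.mul_nonsing_inv Ac hdet
  have hAc2 : Ac⁻¹ * Ac = 1 := Matrix.nonsing_inv_mul Ac hdet
  set L : Module.End ℂ (Fin n → ℂ) := Matrix.toLinAlgEquiv' Ac with hL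
  set L' : Module.End ℂ (Fin n → ℂ) := Matrix.toLinAlgEquiv' Ac⁻¹ with hL'
  have hL1 : L * L' = 1 := by rw [hL, hL', ← map_mul, hAc1, map_one]
  have hL2 : L' * L = 1 := by rw [hL, hL', ← map_mul, hAc2, map_one]
  have hspec' : ∀ μ ∈ spectrum ℂ L, ‖μ‖ ≠ 1 := by
    intro μ hμ
    rw [hL, AlgEquiv.spectrum_eq] at hμ
    exact hspec μ hμ
  obtain ⟨m, hm⟩ := core L L' hL1 hL2 hspec' hε hR
  refine ⟨m, fun B hB1 hB2 y hy1 hy2 => ?_⟩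
  have hLm : L ^ m = Matrix.toLinAlgEquiv' (φ (A ^ m)) := by
    rw [hL, ← map_pow, ← map_pow]
  have hcomm : Commute Ac⁻¹ Ac := hAc2.trans hAc1.symm
  have h4 : Ac⁻¹ ^ m * Ac ^ m = 1 := by rw [← hcomm.mul_pow, hAc2, one_pow]
  have hBc : Ac⁻¹ ^ m = φ B := by
    have h5 : Ac ^ m * φ B = 1 := by rw [← map_pow, ← map_mul, hB2, map_one]
    calc Ac⁻¹ ^ m = Ac⁻¹ ^ m * (Ac ^ m * φ B) := by rw [h5, mul_one]
      _ = (Ac⁻¹ ^ m * Ac ^ m) * φ B := by rw [mul_assoc]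
      _ = φ B := by rw [h4, one_mul]
  have hL'm : L' ^ m = Matrix.toLinAlgEquiv' (φ B) := by
    rw [hL', ← map_pow, hBc]
  -- complexified vector
  set yc : Fin n → ℂ := fun i => (y i : ℂ) with hyc
  have e1 : (L ^ m) yc = fun i => (((A ^ m).mulVec y) i : ℂ) := by
    rw [hLm, Matrix.toLinAlgEquiv'_apply, hφap, hyc]
    exact mulVec_complexify (A ^ m) y
  have e2 : (L' ^ m) yc = fun i => ((B.mulVec y) i : ℂ) := by
    rw [hL'm, Matrix.toLinAlgEquiv'_apply, hφap, hyc]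
    exact mulVec_complexify B y
  have key := hm yc (by rw [e1, norm_complexify]; exact hy1)
    (by rw [e2, norm_complexify]; exact hy2)
  rwa [hyc, norm_complexify] at key


end RigidityAux

/-- With `M^t, N^t` one-parameter subgroups of `GL(n,ℝ)` with no
eigenvalues of `M = M^1` or `N = N^1` on the unit circle, a bijection `f : ℝⁿ → ℝⁿ`
satisfying the uniform quasi-isometry condition between the metrics `d_{M,t}` and
`d_{N,t}` for all `t` is a homeomorphism of `ℝⁿ`. -/
theorem rigidity_map_is_homeomorph {n : ℕ}
    (Mt Nt : ℝ → Matrix (Fin n) (Fin n) ℝ)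
    (hMt : IsOneParamSubgroup Mt) (hNt : IsOneParamSubgroup Nt)
    (hMeig : ∀ μ ∈ spectrum ℂ ((Mt 1).map Complex.ofReal), ‖μ‖ ≠ 1)
    (hNeig : ∀ μ ∈ spectrum ℂ ((Nt 1).map Complex.ofReal), ‖μ‖ ≠ 1)
    (f : (Fin n → ℝ) → (Fin n → ℝ)) (hf : Function.Bijective f)
    (K C : ℝ) (hK : 1 ≤ K) (hC : 0 ≤ C)
    (hineq : ∀ (t : ℝ) (p q : Fin n → ℝ),
      (1 / K) * ‖(Mt (-t)).mulVec (p - q)‖ - C ≤ ‖(Nt (-t)).mulVec (f p - f q)‖ ∧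
      ‖(Nt (-t)).mulVec (f p - f q)‖ ≤ K * ‖(Mt (-t)).mulVec (p - q)‖ + C) :
    IsHomeomorph f := by
  classical
  obtain ⟨hMc, hM0, hMadd, hMunit⟩ := hMt
  obtain ⟨hNc, hN0, hNadd, hNunit⟩ := hNt
  have hKpos : (0:ℝ) < K := lt_of_lt_of_le one_pos hK
  -- integer powers
  have hMpow : ∀ m : ℕ, Mt (m : ℝ) = Mt 1 ^ m := by
    intro m; induction m with
    | zero => simpa using hM0
    | succ m ih =>
      push_cast
      rw [hMadd, ih, pow_succ]
  have hNpow : ∀ m : ℕ, Nt (m : ℝ) = Nt 1 ^ m := by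
    intro m; induction m with
    | zero => simpa using hN0
    | succ m ih =>
      push_cast
      rw [hNadd, ih, pow_succ]
  have hMneg : ∀ m : ℕ, Mt (-(m:ℝ)) * Mt 1 ^ m = 1 := by
    intro m; rw [← hMpow, ← hMadd, neg_add_cancel, hM0]
  have hMneg' : ∀ m : ℕ, Mt 1 ^ m * Mt (-(m:ℝ)) = 1 := by
    intro m; rw [← hMpow, ← hMadd, add_neg_cancel, hM0]
  have hNneg : ∀ m : ℕ, Nt (-(m:ℝ)) * Nt 1 ^ m = 1 := by
    intro m; rw [← hNpow, ← hNadd, neg_add_cancel, hN0]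
  have hNneg' : ∀ m : ℕ, Nt 1 ^ m * Nt (-(m:ℝ)) = 1 := by
    intro m; rw [← hNpow, ← hNadd, add_neg_cancel, hN0]
  -- operator-norm style bound for fixed matrices
  have hbound : ∀ G : Matrix (Fin n) (Fin n) ℝ, ∃ c : ℝ, 0 < c ∧
      ∀ v : Fin n → ℝ, ‖G.mulVec v‖ ≤ c * ‖v‖ := by
    intro G
    set T := LinearMap.toContinuousLinearMap (Matrix.mulVecLin G) with hT
    refine ⟨‖T‖ + 1, by positivity, fun v => ?_⟩
    have h1 : ‖T v‖ ≤ ‖T‖ * ‖v‖ := T.le_opNorm v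
    have h2 : T v = G.mulVec v := rfl
    rw [← h2]
    nlinarith [norm_nonneg v]
  set e := Equiv.ofBijective f hf with he
  -- continuity of f
  have hcont : Continuous f := by
    rw [Metric.continuous_iff]
    intro p ε hε
    obtain ⟨m, hm⟩ := RigidityAux.keyA (Nt 1) (hNunit 1) hNeig (half_pos hε)
      (R := K + C) (by linarith)
    have hm' := hm (Nt (-(m:ℝ))) (hNneg m) (hNneg' m)
    obtain ⟨c1, hc1, hb1⟩ := hbound (Mt 1 ^ m)
    obtain ⟨c2, hc2, hb2⟩ := hbound (Mt (-(m:ℝ)))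
    set c := max c1 c2 with hc
    have hcpos : 0 < c := lt_of_lt_of_le hc1 (le_max_left _ _)
    refine ⟨1 / c, by positivity, fun q hqp => ?_⟩
    have hqp' : ‖q - p‖ ≤ 1 / c := by
      rw [← dist_eq_norm]; exact le_of_lt hqp
    have hsmall : ∀ (G : Matrix (Fin n) (Fin n) ℝ) (cG : ℝ), 0 < cG → cG ≤ c →
        (∀ v, ‖G.mulVec v‖ ≤ cG * ‖v‖) → ‖G.mulVec (q - p)‖ ≤ 1 := by
      intro G cG hcG hle hb
      calc ‖G.mulVec (q - p)‖ ≤ cG * ‖q - p‖ := hb _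
        _ ≤ cG * (1 / c) := mul_le_mul_of_nonneg_left hqp' hcG.le
        _ ≤ c * (1 / c) := mul_le_mul_of_nonneg_right hle (by positivity)
        _ = 1 := mul_one_div_cancel hcpos.ne'
    have hy1 : ‖(Nt 1 ^ m).mulVec (f q - f p)‖ ≤ K + C := by
      have h := (hineq (-(m:ℝ)) q p).2
      simp only [neg_neg] at h
      rw [hNpow m, hMpow m] at h
      have := hsmall (Mt 1 ^ m) c1 hc1 (le_max_left _ _) hb1
      nlinarith
    have hy2 : ‖(Nt (-(m:ℝ))).mulVec (f q - f p)‖ ≤ K + C := by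
      have h := (hineq ((m:ℝ)) q p).2
      have := hsmall (Mt (-(m:ℝ))) c2 hc2 (le_max_right _ _) hb2
      nlinarith
    have hkey := hm' (f q - f p) hy1 hy2
    rw [dist_eq_norm]
    linarith [half_lt_self hε]
  -- continuity of the inverse
  have hcont' : Continuous (e.symm : (Fin n → ℝ) → (Fin n → ℝ)) := by
    rw [Metric.continuous_iff]
    intro u ε hε
    obtain ⟨m, hm⟩ := RigidityAux.keyA (Mt 1) (hMunit 1) hMeig (half_pos hε)
      (R := K * (1 + C)) (by nlinarith)
    have hm' := hm (Mt (-(m:ℝ))) (hMneg m) (hMneg' m)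
    obtain ⟨c1, hc1, hb1⟩ := hbound (Nt 1 ^ m)
    obtain ⟨c2, hc2, hb2⟩ := hbound (Nt (-(m:ℝ)))
    set c := max c1 c2 with hc
    have hcpos : 0 < c := lt_of_lt_of_le hc1 (le_max_left _ _)
    refine ⟨1 / c, by positivity, fun v hvu => ?_⟩
    have hvu' : ‖v - u‖ ≤ 1 / c := by
      rw [← dist_eq_norm]; exact le_of_lt hvu
    have hsmall : ∀ (G : Matrix (Fin n) (Fin n) ℝ) (cG : ℝ), 0 < cG → cG ≤ c →
        (∀ w, ‖G.mulVec w‖ ≤ cG * ‖w‖) → ‖G.mulVec (v - u)‖ ≤ 1 := by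
      intro G cG hcG hle hb
      calc ‖G.mulVec (v - u)‖ ≤ cG * ‖v - u‖ := hb _
        _ ≤ cG * (1 / c) := mul_le_mul_of_nonneg_left hvu' hcG.le
        _ ≤ c * (1 / c) := mul_le_mul_of_nonneg_right hle (by positivity)
        _ = 1 := mul_one_div_cancel hcpos.ne'
    set p := e.symm v with hp
    set q := e.symm u with hq
    have hfp : f p = v := e.apply_symm_apply v
    have hfq : f q = u := e.apply_symm_apply u
    have hlower : ∀ t : ℝ, ‖(Mt (-t)).mulVec (p - q)‖ ≤
        K * (‖(Nt (-t)).mulVec (v - u)‖ + C) := by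
      intro t
      have h := (hineq t p q).1
      rw [hfp, hfq] at h
      have h2 : (1/K) * ‖(Mt (-t)).mulVec (p - q)‖ ≤ ‖(Nt (-t)).mulVec (v - u)‖ + C := by
        linarith
      have h3 := mul_le_mul_of_nonneg_left h2 hKpos.le
      rwa [← mul_assoc, mul_one_div_cancel hKpos.ne', one_mul] at h3
    have hy1 : ‖(Mt 1 ^ m).mulVec (p - q)‖ ≤ K * (1 + C) := by
      have h := hlower (-(m:ℝ))
      simp only [neg_neg] at h
      rw [hMpow m, hNpow m] at h
      have := hsmall (Nt 1 ^ m) c1 hc1 (le_max_left _ _) hb1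
      nlinarith
    have hy2 : ‖(Mt (-(m:ℝ))).mulVec (p - q)‖ ≤ K * (1 + C) := by
      have h := hlower ((m:ℝ))
      have := hsmall (Nt (-(m:ℝ))) c2 hc2 (le_max_right _ _) hb2
      nlinarith
    have hkey := hm' (p - q) hy1 hy2
    rw [dist_eq_norm]
    have : ‖e.symm v - e.symm u‖ = ‖p - q‖ := rfl
    rw [this]
    linarith [half_lt_self hε]
  rw [isHomeomorph_iff_exists_inverse]
  exact ⟨hcont, e.symm, fun x => e.symm_apply_apply x, fun u => e.apply_symm_apply u, hcont'⟩
end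

section
/- Let A be a finitely generated group and φ: A → A an injective endomorphism whose image has finite index. Then φ(V(A)) ⊆ V(A), where V(A) = {g ∈ A : [A : C_A(g)] < ∞} is the virtual center. -/
/-- If `A` is a finitely generated group and `φ : A → A` is an injective
endomorphism whose image has finite index, then `φ` maps the virtual center
`V(A) = {g | [A : C_A(g)] < ∞}` into itself. -/
theorem virtual_center_endo_invariant (A : Type*) [Group A] (hfg : Group.FG A)
    (φ : A →* A) (hinj : Function.Injective φ) (hfi : φ.range.FiniteIndex) :
    ∀ g : A, (Subgroup.centralizer {g}).FiniteIndex →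
      (Subgroup.centralizer {φ g}).FiniteIndex := by
  intro g hg
  have hmap : ((Subgroup.centralizer {g}).map φ).FiniteIndex := by
    constructor
    rw [Subgroup.index_map, (MonoidHom.ker_eq_bot_iff φ).mpr hinj, sup_bot_eq]
    exact mul_ne_zero hg.index_ne_zero hfi.index_ne_zero
  refine @Subgroup.finiteIndex_of_le _ _ _ _ hmap ?_
  rintro _ ⟨x, hx, rfl⟩
  rw [SetLike.mem_coe, Subgroup.mem_centralizer_iff] at hx
  rw [Subgroup.mem_centralizer_iff]
  rintro _ rfl
  rw [← map_mul, ← map_mul, hx g rfl]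
end

section
/- Let V be a finitely generated group whose center Z(V) has finite index in V, and let φ: V → V be an injective endomorphism whose image φ(V) has finite index in V. Then φ(Z(V)) ⊆ Z(V). In fact φ(Z(V)) = Z(φ(V)) = φ(V) ∩ Z(V). -/
/-- If `V` is a finitely generated group whose center has finite index
and `φ : V → V` is an injective endomorphism with finite-index image, then
`φ(Z(V)) ⊆ Z(V)`; in fact `φ(Z(V)) = Z(φ(V)) = φ(V) ∩ Z(V)`. -/
theorem center_endo_invariant (V : Type*) [Group V] (hfg : Group.FG V)
    (hZ : (Subgroup.center V).FiniteIndex)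
    (φ : V →* V) (hinj : Function.Injective φ) (hfi : φ.range.FiniteIndex) :
    (Subgroup.center V).map φ ≤ Subgroup.center V ∧
    (Subgroup.center V).map φ = φ.range ⊓ Subgroup.centralizer (φ.range : Set V) ∧
    (Subgroup.center V).map φ = φ.range ⊓ Subgroup.center V := by
  set Z := Subgroup.center V with hZdef
  set A := Z.map φ with hAdef
  set B := φ.range ⊓ Subgroup.centralizer (φ.range : Set V) with hBdef
  set C := φ.range ⊓ Z with hCdef
  -- Step 1: A = B (isomorphisms carry the center onto the center)
  have hAB : A = B := by
    apply le_antisymm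
    · rintro _ ⟨z, hz, rfl⟩
      refine ⟨⟨z, rfl⟩, ?_⟩
      rintro _ ⟨v, rfl⟩
      rw [← map_mul, ← map_mul, Subgroup.mem_center_iff.mp hz v]
    · rintro x ⟨⟨v, rfl⟩, hx⟩
      refine ⟨v, Subgroup.mem_center_iff.mpr fun w => hinj ?_, rfl⟩
      rw [map_mul, map_mul, hx (φ w) ⟨w, rfl⟩]
  -- Step 2: C ≤ B
  have hCB : C ≤ B := by
    rintro x ⟨hr, hz⟩
    exact ⟨hr, fun g _ => Subgroup.mem_center_iff.mp hz g⟩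
  have hn : Z.index ≠ 0 := hZ.index_ne_zero
  have hr : φ.range.index ≠ 0 := hfi.index_ne_zero
  -- Step 3: A.relIndex φ.range = Z.index
  have hker : φ.ker = ⊥ := (MonoidHom.ker_eq_bot_iff φ).mpr hinj
  have hAidx : A.index = Z.index * φ.range.index := by
    rw [hAdef, Subgroup.index_map, hker, sup_bot_eq]
  have hArel : A.relIndex φ.range = Z.index := by
    have h1 : A.relIndex φ.range * φ.range.index = A.index :=
      Subgroup.relIndex_mul_index (Subgroup.map_le_range φ Z)
    rw [hAidx] at h1
    exact Nat.eq_of_mul_eq_mul_right (Nat.pos_of_ne_zero hr) h1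
  -- Step 4: C.relIndex φ.range divides Z.index
  have hCrel : C.relIndex φ.range ∣ Z.index := by
    rw [hCdef, inf_comm, Subgroup.inf_relIndex_right]
    exact Subgroup.relIndex_dvd_index_of_normal Z φ.range
  -- Step 5: tower law
  have htower : C.relIndex B * B.relIndex φ.range = C.relIndex φ.range :=
    Subgroup.relIndex_mul_relIndex C B φ.range hCB inf_le_left
  have hBrel : B.relIndex φ.range = Z.index := hAB ▸ hArel
  -- conclude C.relIndex B = 1
  have hdvd : Z.index ∣ C.relIndex φ.range := by
    rw [← htower, hBrel]; exact Dvd.intro_left _ rfl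
  have heq : C.relIndex φ.range = Z.index := Nat.dvd_antisymm hCrel hdvd
  have hone : C.relIndex B = 1 := by
    have := htower
    rw [hBrel, heq] at this
    nlinarith [Nat.pos_of_ne_zero hn, this]
  have hBC : B ≤ C := Subgroup.relIndex_eq_one.mp hone
  have hBCeq : B = C := le_antisymm hBC hCB
  exact ⟨(hAB.trans hBCeq) ▸ inf_le_right, hAB, hAB.trans hBCeq⟩
end

section
/- Let A be a finitely generated virtually abelian group. Then the torsion subgroup of the center of the virtual center of A, T(Z(V(A))), is a finite subgroup that is invariant under every injective endomorphism of A; moreover every injective endomorphism of A maps T(Z(V(A))) onto itself. -/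
/-- The virtual center of `A`: elements with finite-index centralizer. -/
def virtCenterSet (A : Type*) [Group A] : Set A :=
  {g : A | (Subgroup.centralizer {g}).FiniteIndex}

/-- The center of the virtual center of `A` (as a set). -/
def centerVirtCenterSet (A : Type*) [Group A] : Set A :=
  {g : A | g ∈ virtCenterSet A ∧ ∀ h ∈ virtCenterSet A, g * h = h * g}

/-- The torsion part `T(Z(V(A)))` of the center of the virtual center of `A`. -/
def torsionCenterVirtCenterSet (A : Type*) [Group A] : Set A :=
  {g : A | g ∈ centerVirtCenterSet A ∧ ∃ k : ℕ, 0 < k ∧ g ^ k = 1}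


open Subgroup
open IsMulCommutative

private lemma int_module_eq {X : Type*} [AddCommGroup X] (i1 i2 : Module ℤ X) : i1 = i2 := by
  haveI : Unique (Module ℤ X) := AddCommGroup.uniqueIntModule
  exact Subsingleton.elim _ _

theorem aux_module_finite {M : Type*} [AddCommGroup M] [Module.Finite ℤ M]
    (N : Submodule ℤ M) (hN : Finite (M ⧸ N)) (f : ↥N →ₗ[ℤ] M) (hf : Function.Injective f) :
    Finite (M ⧸ LinearMap.range f) := by
  have hrankM : Module.rank ℤ M < Cardinal.aleph0 := Module.rank_lt_aleph0 ℤ M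
  have htors : @Module.IsTorsion ℤ (M ⧸ N) _ _ (Submodule.Quotient.module N) := by
    intro x
    have hcard : (Nat.card (M ⧸ N) : ℤ) ≠ 0 := by
      exact_mod_cast Nat.card_ne_zero.mpr ⟨⟨0⟩, hN⟩
    refine ⟨⟨(Nat.card (M ⧸ N) : ℤ), mem_nonZeroDivisors_of_ne_zero hcard⟩, ?_⟩
    have h1 : ((Nat.card (M ⧸ N) : ℤ)) • x = 0 := by
      rw [natCast_zsmul]
      exact card_nsmul_eq_zero'
    rw [Submonoid.smul_def]
    exact (int_smul_eq_zsmul _ _ _).trans h1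
  have B : @Module.rank ℤ (M ⧸ N) _ _ (Submodule.Quotient.module N) = 0 :=
    (@rank_eq_zero_iff_isTorsion ℤ (M ⧸ N) _ _ _ (Submodule.Quotient.module N)).mpr htors
  have A := rank_quotient_add_rank_of_isDomain (R := ℤ) N
  rw [B, zero_add] at A
  -- A : rank ↥N = rank M
  have C := (LinearEquiv.ofInjective f hf).rank_eq
  -- C : rank ↥N = rank ↥(range f)
  have D := rank_quotient_add_rank_of_isDomain (R := ℤ) (LinearMap.range f)
  rw [← C, A] at D
  have E := rank_quotient_le (LinearMap.range f)
  have hqlt : @Module.rank ℤ (M ⧸ LinearMap.range f) _ _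
      (Submodule.Quotient.module (LinearMap.range f)) < Cardinal.aleph0 :=
    lt_of_le_of_lt E hrankM
  have hq0 : @Module.rank ℤ (M ⧸ LinearMap.range f) _ _
      (Submodule.Quotient.module (LinearMap.range f)) = 0 := by
    have h2 := congrArg Cardinal.toNat D
    rw [Cardinal.toNat_add hqlt hrankM] at h2
    have h0 := Nat.add_right_cancel (h2.trans (Nat.zero_add _).symm)
    rcases Cardinal.toNat_eq_zero.mp h0 with h | h
    · exact h
    · exact absurd (lt_of_lt_of_le hqlt h) (lt_irrefl _)
  have htq := (@rank_eq_zero_iff_isTorsion ℤ (M ⧸ LinearMap.range f) _ _ _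
      (Submodule.Quotient.module (LinearMap.range f))).mp hq0
  have hfgq : AddGroup.FG (M ⧸ LinearMap.range f) := by
    have h3 : Module.Finite ℤ (M ⧸ LinearMap.range f) := Module.Finite.quotient ℤ _
    exact Module.Finite.iff_addGroup_fg.mp h3
  have htor : AddMonoid.IsTorsion (M ⧸ LinearMap.range f) := by
    intro x
    obtain ⟨⟨a, ha⟩, hax⟩ := @htq x
    have ha0 : a ≠ 0 := nonZeroDivisors.ne_zero ha
    rw [Submonoid.smul_def] at hax
    have hax' : a • x = 0 := (int_smul_eq_zsmul _ a x).symm.trans hax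
    refine isOfFinAddOrder_iff_nsmul_eq_zero.mpr ⟨a.natAbs, Int.natAbs_pos.mpr ha0, ?_⟩
    have : ((a.natAbs : ℤ)) • x = 0 := by
      rcases Int.natAbs_eq a with h | h
      · rw [← h]; exact hax'
      · rw [show ((a.natAbs : ℤ)) = -a by omega, neg_zsmul, hax', neg_zero]
    rw [← natCast_zsmul]; exact this
  exact AddCommGroup.finite_of_fg_torsion _ htor

theorem aux_comm_finiteindex {Z : Type*} [CommGroup Z] [hfgZ : Group.FG Z]
    (L : Subgroup Z) (hL : L.FiniteIndex) (f : ↥L →* Z) (hf : Function.Injective f) :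
    f.range.FiniteIndex := by
  classical
  haveI : Module.Finite ℤ (Additive Z) :=
    Module.Finite.iff_addGroup_fg.mpr (GroupFG.iff_add_fg.mp hfgZ)
  set N : Submodule ℤ (Additive Z) := AddSubgroup.toIntSubmodule (Subgroup.toAddSubgroup L) with hNdef
  have hmemN : ∀ x : Additive Z, x ∈ N ↔ Additive.toMul x ∈ L := fun x => Iff.rfl
  -- the quotient M ⧸ N is finite
  haveI : Finite (Z ⧸ L) := Subgroup.finite_quotient_of_finiteIndex (H := L)
  have hN : Finite ((Additive Z) ⧸ N) := by
    have hsurj : Function.Surjective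
        (fun q : Z ⧸ L => Quotient.liftOn' q
          (fun z => Submodule.Quotient.mk (p := N) (Additive.ofMul z))
          (by
            intro a b hab
            have h1 : a⁻¹ * b ∈ L := (QuotientGroup.leftRel_apply).mp hab
            refine (Submodule.Quotient.eq N).mpr ?_
            rw [sub_eq_add_neg]
            have h2 : a * b⁻¹ ∈ L := by
              have := L.inv_mem h1
              simpa [mul_comm, mul_assoc] using this
            exact (hmemN _).mpr h2)) := by
      rintro ⟨m⟩
      exact ⟨QuotientGroup.mk (Additive.toMul m), rfl⟩
    exact Finite.of_surjective _ hsurj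
  -- the linear map induced by f
  have hmem' : ∀ x : ↥N, Additive.toMul x.1 ∈ L := fun x => x.2
  set g : ↥N →+ (Additive Z) :=
    { toFun := fun x => Additive.ofMul (f ⟨Additive.toMul x.1, hmem' x⟩),
      map_zero' := congrArg Additive.ofMul (map_one f),
      map_add' := by
        intro a b
        have : (⟨Additive.toMul (a + b).1, hmem' (a+b)⟩ : ↥L)
            = ⟨Additive.toMul a.1, hmem' a⟩ * ⟨Additive.toMul b.1, hmem' b⟩ := rfl
        show Additive.ofMul (f _) = Additive.ofMul (f _) + Additive.ofMul (f _)
        rw [this, map_mul]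
        rfl } with hgdef
  have hginj : Function.Injective g := by
    intro a b hab
    have h1 : f ⟨Additive.toMul a.1, hmem' a⟩ = f ⟨Additive.toMul b.1, hmem' b⟩ := hab
    have h2 := hf h1
    have h3 : Additive.toMul a.1 = Additive.toMul b.1 := congrArg Subtype.val h2
    exact Subtype.ext h3
  have hfin := aux_module_finite N hN g.toIntLinearMap hginj
  -- transfer back
  have hsurj2 : Function.Surjective
      (fun q : (Additive Z) ⧸ (LinearMap.range g.toIntLinearMap) =>
        Quotient.liftOn' q (fun m => QuotientGroup.mk (s := f.range) (Additive.toMul m))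
        (by
          intro a b hab
          have h1 : -a + b ∈ (LinearMap.range g.toIntLinearMap) :=
            (QuotientAddGroup.leftRel_apply).mp hab
          obtain ⟨n, hn⟩ := h1
          refine (QuotientGroup.eq).mpr ?_
          refine ⟨⟨Additive.toMul n.1, hmem' n⟩, ?_⟩
          have : g n = -a + b := hn
          have h2 : Additive.ofMul (f ⟨Additive.toMul n.1, hmem' n⟩) = -a + b := this
          have h3 : f ⟨Additive.toMul n.1, hmem' n⟩
              = (Additive.toMul a)⁻¹ * (Additive.toMul b) := congrArg Additive.toMul h2
          exact h3)) := by
    rintro ⟨z⟩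
    exact ⟨Submodule.Quotient.mk (Additive.ofMul z), rfl⟩
  haveI hfin2 : Finite (Z ⧸ f.range) := Finite.of_surjective _ hsurj2
  exact Subgroup.finiteIndex_of_finite_quotient



/-- The virtual center as a subgroup. -/
def virtCenterSub (A : Type*) [Group A] : Subgroup A where
  carrier := virtCenterSet A
  one_mem' := by
    show (Subgroup.centralizer {(1:A)}).FiniteIndex
    have h : Subgroup.centralizer {(1:A)} = ⊤ := by
      ext x; simp [Subgroup.mem_centralizer_singleton_iff]
    rw [h]; infer_instance
  mul_mem' := by
    intro a b ha hb
    haveI : (Subgroup.centralizer {a}).FiniteIndex := ha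
    haveI : (Subgroup.centralizer {b}).FiniteIndex := hb
    have hle : Subgroup.centralizer {a} ⊓ Subgroup.centralizer {b}
        ≤ Subgroup.centralizer {a*b} := by
      rintro x ⟨hxa, hxb⟩
      have e1 := Subgroup.mem_centralizer_singleton_iff.mp hxa
      have e2 := Subgroup.mem_centralizer_singleton_iff.mp hxb
      rw [Subgroup.mem_centralizer_singleton_iff, ← mul_assoc, e1, mul_assoc, e2, ← mul_assoc]
    exact Subgroup.finiteIndex_of_le hle
  inv_mem' := by
    intro a ha
    haveI ha' : (Subgroup.centralizer {a}).FiniteIndex := ha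
    show (Subgroup.centralizer {a⁻¹}).FiniteIndex
    have h : Subgroup.centralizer {a⁻¹} = Subgroup.centralizer {a} := by
      ext x
      simp only [Subgroup.mem_centralizer_singleton_iff]
      constructor
      · intro h
        have h2 : Commute x a⁻¹ := h
        simpa using h2.inv_right.eq
      · intro h
        exact (Commute.inv_right h : Commute x a⁻¹)
    rw [h]; exact ha'

lemma mem_virtCenterSub {A : Type*} [Group A] {g : A} :
    g ∈ virtCenterSub A ↔ g ∈ virtCenterSet A := Iff.rfl

/-- The center of the virtual center, as a subgroup. -/
def centerVirtCenterSub (A : Type*) [Group A] : Subgroup A :=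
  virtCenterSub A ⊓ Subgroup.centralizer (virtCenterSet A)

lemma mem_centerVirtCenterSub {A : Type*} [Group A] {g : A} :
    g ∈ centerVirtCenterSub A ↔
      (g ∈ virtCenterSet A ∧ ∀ h ∈ virtCenterSet A, g * h = h * g) := by
  constructor
  · rintro ⟨h1, h2⟩
    exact ⟨h1, fun h hh => (Subgroup.mem_centralizer_iff.mp h2 h hh).symm⟩
  · rintro ⟨h1, h2⟩
    exact ⟨h1, Subgroup.mem_centralizer_iff.mpr fun h hh => (h2 h hh).symm⟩

section Main

variable {A : Type*} [Group A]

lemma virtCenterSub_finiteIndex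
    (hva : ∃ B : Subgroup A, B.FiniteIndex ∧ ∀ x ∈ B, ∀ y ∈ B, x * y = y * x) :
    (virtCenterSub A).FiniteIndex := by
  obtain ⟨B, hBfi, hBcomm⟩ := hva
  haveI := hBfi
  refine Subgroup.finiteIndex_of_le (H := B) ?_
  intro b hb
  show (Subgroup.centralizer {b}).FiniteIndex
  refine Subgroup.finiteIndex_of_le (H := B) ?_
  intro x hx
  rw [Subgroup.mem_centralizer_singleton_iff]
  exact hBcomm x hx b hb

lemma centerVirtCenterSub_finiteIndex (hfg : Group.FG A)
    (hva : ∃ B : Subgroup A, B.FiniteIndex ∧ ∀ x ∈ B, ∀ y ∈ B, x * y = y * x) :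
    (centerVirtCenterSub A).FiniteIndex := by
  haveI := virtCenterSub_finiteIndex hva
  haveI : Group.FG ↥(virtCenterSub A) := Subgroup.fg_of_index_ne_zero _
  have hVfg : (virtCenterSub A).FG := (Group.fg_iff_subgroup_fg _).mp inferInstance
  obtain ⟨S, hScl, hSfin⟩ := (Subgroup.fg_iff _).mp hVfg
  haveI : Finite ↥S := hSfin
  have hSV : ∀ g ∈ S, g ∈ virtCenterSub A := fun g hg => hScl ▸ Subgroup.subset_closure hg
  set K : Subgroup A := virtCenterSub A ⊓ ⨅ g : S, Subgroup.centralizer {(g : A)} with hK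
  haveI : (⨅ g : S, Subgroup.centralizer {(g : A)}).FiniteIndex := by
    refine Subgroup.finiteIndex_iInf fun g => ?_
    exact hSV g.1 g.2
  haveI hKfi : K.FiniteIndex := by rw [hK]; infer_instance
  refine Subgroup.finiteIndex_of_le (H := K) ?_
  rintro x ⟨hxV, hxC⟩
  refine ⟨hxV, Subgroup.mem_centralizer_iff.mpr ?_⟩
  intro h hh
  have hh' : h ∈ Subgroup.closure S := by rw [hScl]; exact hh
  clear hh
  induction hh' using Subgroup.closure_induction with
  | mem y hy =>
      have := Subgroup.mem_iInf.mp hxC ⟨y, hy⟩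
      exact (Subgroup.mem_centralizer_singleton_iff.mp this).symm
  | one => simp
  | mul y z _ _ hy hz => rw [mul_assoc, hz, ← mul_assoc, hy, mul_assoc]
  | inv y _ hy => exact ((show Commute y x from hy).inv_left)

lemma cvc_isCommutative : IsMulCommutative (centerVirtCenterSub A) :=
  ⟨⟨fun x y => Subtype.ext ((Subgroup.mem_centralizer_iff.mp x.2.2 y.1 y.2.1).symm)⟩⟩

lemma torsionZ_finite (hfg : Group.FG A)
    (hva : ∃ B : Subgroup A, B.FiniteIndex ∧ ∀ x ∈ B, ∀ y ∈ B, x * y = y * x) :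
    {g : A | g ∈ centerVirtCenterSub A ∧ IsOfFinOrder g}.Finite := by
  haveI := centerVirtCenterSub_finiteIndex hfg hva
  haveI : IsMulCommutative (centerVirtCenterSub A) := cvc_isCommutative
  haveI : Group.FG ↥(centerVirtCenterSub A) := Subgroup.fg_of_index_ne_zero _
  set Zc := centerVirtCenterSub A with hZc
  set T := CommGroup.torsion ↥Zc with hT
  have hTfin : Finite ↥T := by
    haveI : Module.Finite ℤ (Additive ↥Zc) :=
      Module.Finite.iff_addGroup_fg.mpr (GroupFG.iff_add_fg.mp inferInstance)
    haveI : IsNoetherian ℤ (Additive ↥Zc) := isNoetherian_of_isNoetherianRing_of_finite ℤ _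
    have hsub : (AddSubgroup.toIntSubmodule (Subgroup.toAddSubgroup T)).FG :=
      IsNoetherian.noetherian _
    have h1 : (Subgroup.toAddSubgroup T).FG := by
      have := (Submodule.fg_iff_addSubgroup_fg _).mp hsub
      rwa [AddSubgroup.toIntSubmodule_toAddSubgroup] at this
    have h2 : T.FG := (Subgroup.fg_iff_add_fg T).mpr h1
    haveI : Group.FG ↥T := (Group.fg_iff_subgroup_fg T).mpr h2
    refine CommGroup.finite_of_fg_torsion ↥T ?_
    intro g
    obtain ⟨n, npos, hn⟩ := isOfFinOrder_iff_pow_eq_one.mp g.2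
    refine isOfFinOrder_iff_pow_eq_one.mpr ⟨n, npos, Subtype.ext ?_⟩
    simpa using hn
  have hsubr : {g : A | g ∈ Zc ∧ IsOfFinOrder g}
      ⊆ Set.range (fun t : ↥T => ((t : ↥Zc) : A)) := by
    rintro g ⟨hg, hord⟩
    obtain ⟨n, npos, hn⟩ := isOfFinOrder_iff_pow_eq_one.mp hord
    refine ⟨⟨⟨g, hg⟩, isOfFinOrder_iff_pow_eq_one.mpr ⟨n, npos, Subtype.ext ?_⟩⟩, rfl⟩
    simpa using hn
  exact Set.Finite.subset (Set.finite_range _) hsubr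

lemma W_finite (hfg : Group.FG A)
    (hva : ∃ B : Subgroup A, B.FiniteIndex ∧ ∀ x ∈ B, ∀ y ∈ B, x * y = y * x) :
    {g : A | g ∈ virtCenterSub A ∧ IsOfFinOrder g}.Finite := by
  haveI hZfi := centerVirtCenterSub_finiteIndex hfg hva
  have hTZ := torsionZ_finite hfg hva
  set Zc := centerVirtCenterSub A with hZc
  haveI : Finite (A ⧸ Zc) := Subgroup.finite_quotient_of_finiteIndex
  set W := {g : A | g ∈ virtCenterSub A ∧ IsOfFinOrder g} with hW
  have hcover : W ⊆ ⋃ q : A ⧸ Zc, {g : A | g ∈ W ∧ QuotientGroup.mk g = q} := by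
    intro g hg; exact Set.mem_iUnion.mpr ⟨QuotientGroup.mk g, hg, rfl⟩
  refine Set.Finite.subset (Set.finite_iUnion ?_) hcover
  intro q
  by_cases hne : {g : A | g ∈ W ∧ QuotientGroup.mk g = q}.Nonempty
  · obtain ⟨t, htW, htq⟩ := hne
    refine Set.Finite.subset (hTZ.image (fun z => t * z)) ?_
    rintro w ⟨hwW, hwq⟩
    have hz : t⁻¹ * w ∈ Zc := by
      rw [← QuotientGroup.eq, htq, hwq]
    set z := t⁻¹ * w with hzdef
    have hwz : w = t * z := by rw [hzdef, ← mul_assoc, mul_inv_cancel, one_mul]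
    have hc1 : t * z = z * t := Subgroup.mem_centralizer_iff.mp hz.2 t htW.1
    have hcomm : Commute t⁻¹ w := by
      have ctz : Commute t z := hc1
      have ctw : Commute t w := by rw [hwz]; exact (Commute.refl t).mul_right ctz
      exact ctw.inv_left
    have hordz : IsOfFinOrder z := by
      rw [hzdef]
      exact hcomm.isOfFinOrder_mul (htW.2.inv) hwW.2
    exact ⟨z, ⟨hz, hordz⟩, hwz.symm⟩
  · rw [Set.not_nonempty_iff_eq_empty] at hne
    rw [hne]
    exact Set.finite_empty

end Main

lemma mem_cvc_set_iff {A : Type*} [Group A] {g : A} :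
    g ∈ centerVirtCenterSet A ↔ g ∈ centerVirtCenterSub A := by
  rw [mem_centerVirtCenterSub]
  rfl

/-- For a finitely generated virtually abelian group `A`, the torsion
subgroup `T(Z(V(A)))` of the center of the virtual center is finite, and every
injective endomorphism of `A` maps it onto itself. -/
theorem torsion_center_virtual_center_finite_invariant (A : Type*) [Group A]
    (hfg : Group.FG A)
    (hva : ∃ B : Subgroup A, B.FiniteIndex ∧ ∀ x ∈ B, ∀ y ∈ B, x * y = y * x) :
    (torsionCenterVirtCenterSet A).Finite ∧
    ∀ φ : A →* A, Function.Injective φ →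
      φ '' torsionCenterVirtCenterSet A = torsionCenterVirtCenterSet A := by
  have hWfin := W_finite hfg hva
  have hTW : torsionCenterVirtCenterSet A ⊆ {g : A | g ∈ virtCenterSub A ∧ IsOfFinOrder g} := by
    rintro g ⟨hgc, k, hk, hgk⟩
    exact ⟨hgc.1, isOfFinOrder_iff_pow_eq_one.mpr ⟨k, hk, hgk⟩⟩
  constructor
  · exact hWfin.subset hTW
  · intro φ hφ
    haveI hZfi : (centerVirtCenterSub A).FiniteIndex := centerVirtCenterSub_finiteIndex hfg hva
    haveI hVfi := virtCenterSub_finiteIndex hva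
    haveI : IsMulCommutative (centerVirtCenterSub A) := cvc_isCommutative
    haveI : Group.FG ↥(centerVirtCenterSub A) := Subgroup.fg_of_index_ne_zero _
    -- the comap of Zc has finite index
    haveI hcomap : ((centerVirtCenterSub A).comap φ).FiniteIndex := by
      constructor
      rw [Subgroup.index_comap]
      exact (Subgroup.instFiniteIndex_subgroupOf (centerVirtCenterSub A) φ.range).index_ne_zero
    set L : Subgroup A := centerVirtCenterSub A ⊓ (centerVirtCenterSub A).comap φ with hLdef
    haveI hLfi : L.FiniteIndex := inferInstance
    set f : ↥(L.subgroupOf (centerVirtCenterSub A)) →* ↥(centerVirtCenterSub A) :=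
      { toFun := fun x => ⟨φ x.1.1, x.2.2⟩,
        map_one' := Subtype.ext (by simp),
        map_mul' := fun a b => Subtype.ext (by simp) } with hfdef
    have hfinj : Function.Injective f := by
      intro a b hab
      have h1 : φ a.1.1 = φ b.1.1 := congrArg Subtype.val hab
      exact Subtype.ext (Subtype.ext (hφ h1))
    haveI : (L.subgroupOf (centerVirtCenterSub A)).FiniteIndex :=
      Subgroup.instFiniteIndex_subgroupOf L (centerVirtCenterSub A)
    have hrangef := aux_comm_finiteindex (L.subgroupOf (centerVirtCenterSub A))
      inferInstance f hfinj
    have hRfle : f.range.map (centerVirtCenterSub A).subtype ≤ φ.range := by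
      rintro x ⟨y, ⟨w, rfl⟩, rfl⟩
      exact ⟨w.1.1, rfl⟩
    haveI hRffi : (f.range.map (centerVirtCenterSub A).subtype).FiniteIndex := by
      constructor
      rw [Subgroup.index_map_of_injective f.range (centerVirtCenterSub A).subtype_injective]
      rw [Subgroup.range_subtype]
      exact Nat.mul_ne_zero hrangef.index_ne_zero hZfi.index_ne_zero
    haveI hφrange : φ.range.FiniteIndex := Subgroup.finiteIndex_of_le hRfle
    -- φ maps the virtual center into itself
    have hVmap : ∀ g ∈ virtCenterSub A, φ g ∈ virtCenterSub A := by
      intro g hg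
      haveI : (Subgroup.centralizer {g}).FiniteIndex := hg
      show (Subgroup.centralizer {φ g}).FiniteIndex
      have hle : (Subgroup.centralizer {g}).map φ ≤ Subgroup.centralizer {φ g} := by
        rintro x ⟨y, hy, rfl⟩
        rw [Subgroup.mem_centralizer_singleton_iff, ← map_mul, ← map_mul]
        exact congrArg φ (Subgroup.mem_centralizer_singleton_iff.mp hy)
      haveI : ((Subgroup.centralizer {g}).map φ).FiniteIndex := by
        constructor
        rw [Subgroup.index_map_of_injective _ hφ]
        exact Nat.mul_ne_zero Subgroup.FiniteIndex.index_ne_zero hφrange.index_ne_zero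
      exact Subgroup.finiteIndex_of_le hle
    -- φ maps W into W
    set W := {g : A | g ∈ virtCenterSub A ∧ IsOfFinOrder g} with hWdef
    have hmapsW : ∀ g ∈ W, φ g ∈ W := fun g hg => ⟨hVmap g hg.1, φ.isOfFinOrder hg.2⟩
    -- backward invariance of T
    have hback : ∀ g : A, φ g ∈ torsionCenterVirtCenterSet A → g ∈ torsionCenterVirtCenterSet A := by
      rintro g ⟨⟨hgV, hgc⟩, k, hk, hgk⟩
      refine ⟨⟨?_, ?_⟩, k, hk, hφ (by rw [map_pow, hgk, map_one])⟩
      · show (Subgroup.centralizer {g}).FiniteIndex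
        haveI : (Subgroup.centralizer {φ g}).FiniteIndex := hgV
        have hle : (Subgroup.centralizer {φ g}).comap φ ≤ Subgroup.centralizer {g} := by
          intro x hx
          have h1 : φ x * φ g = φ g * φ x := Subgroup.mem_centralizer_singleton_iff.mp hx
          rw [Subgroup.mem_centralizer_singleton_iff]
          exact hφ (by rw [map_mul, map_mul, h1])
        haveI : ((Subgroup.centralizer {φ g}).comap φ).FiniteIndex := by
          constructor
          rw [Subgroup.index_comap]
          exact (Subgroup.instFiniteIndex_subgroupOf _ φ.range).index_ne_zero
        exact Subgroup.finiteIndex_of_le hle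
      · intro h hh
        have h2 : φ h ∈ virtCenterSet A := hVmap h hh
        exact hφ (by rw [map_mul, map_mul, hgc (φ h) h2])
    -- φ '' W = W
    have himgW : φ '' W = W := by
      refine Set.eq_of_subset_of_ncard_le ?_ ?_ hWfin
      · rintro x ⟨g, hg, rfl⟩
        exact hmapsW g hg
      · exact le_of_eq (Set.ncard_image_of_injective W hφ).symm
    -- conclude
    have hsub1 : torsionCenterVirtCenterSet A ⊆ φ '' torsionCenterVirtCenterSet A := by
      intro t ht
      have htW : t ∈ W := hTW ht
      rw [← himgW] at htW
      obtain ⟨w, hwW, hwt⟩ := htW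
      exact ⟨w, hback w (hwt ▸ ht), hwt⟩
    refine (Set.eq_of_subset_of_ncard_le hsub1 ?_ ((hWfin.subset hTW).image φ)).symm
    exact le_of_eq (Set.ncard_image_of_injective _ hφ)
end
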